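/- arXiv:2306.02399 — 8 statements merged into one kernel-verified Lean document; each statement's English description precedes it below -/
import Mathlib

section
/- Let a ≤ b be real numbers, let u : ℝ → ℝ be continuous and nondecreasing, let λ ∈ ℝ, and let μ, ν be Borel probability measures on ℝ supported on [a,b] with CDFs F_μ, F_ν. Then ∫_{[a,b]} u(x − λ) dμ(x) − ∫_{[a,b]} u(x − λ) dν(x) ≤ (u(b − λ) − u(a − λ)) · sup_{t∈ℝ} |F_μ(t) − F_ν(t)|. -/
open MeasureTheory Set ENNReal

/-- For a continuous nondecreasing `u` and probability measures `μ, ν` supported on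
`[a, b]`, the difference of integrals of `x ↦ u (x - λ)` is bounded by
`(u (b - λ) - u (a - λ))` times the supremum distance between the CDFs. -/
theorem integral_utility_diff_le
    (a b : ℝ) (hab : a ≤ b) (u : ℝ → ℝ) (hu_cont : Continuous u)
    (hu_mono : Monotone u) (lam : ℝ) (μ ν : Measure ℝ)
    [IsProbabilityMeasure μ] [IsProbabilityMeasure ν]
    (hμ : μ (Set.Icc a b) = 1) (hν : ν (Set.Icc a b) = 1) :
    (∫ x in Set.Icc a b, u (x - lam) ∂μ) - (∫ x in Set.Icc a b, u (x - lam) ∂ν) ≤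
      (u (b - lam) - u (a - lam)) *
        ⨆ t : ℝ, |(μ (Set.Iic t)).toReal - (ν (Set.Iic t)).toReal| := by
  set D : ℝ := ⨆ t : ℝ, |(μ (Set.Iic t)).toReal - (ν (Set.Iic t)).toReal| with hDdef
  -- boundedness of the family of CDF differences
  have htoReal_le_one : ∀ (m : Measure ℝ) [IsProbabilityMeasure m] (s : Set ℝ),
      (m s).toReal ≤ 1 := by
    intro m _ s
    have : (m s).toReal ≤ (1 : ℝ≥0∞).toReal :=
      ENNReal.toReal_mono ENNReal.one_ne_top prob_le_one
    simpa using this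
  have hbdd : BddAbove (Set.range fun t : ℝ =>
      |(μ (Set.Iic t)).toReal - (ν (Set.Iic t)).toReal|) := by
    refine ⟨1, ?_⟩
    rintro _ ⟨t, rfl⟩
    have h1 := htoReal_le_one μ (Set.Iic t)
    have h2 := htoReal_le_one ν (Set.Iic t)
    have h3 : (0:ℝ) ≤ (μ (Set.Iic t)).toReal := ENNReal.toReal_nonneg
    have h4 : (0:ℝ) ≤ (ν (Set.Iic t)).toReal := ENNReal.toReal_nonneg
    rw [abs_le]; constructor <;> linarith
  have hD0 : 0 ≤ D := le_trans (abs_nonneg _) (le_ciSup hbdd 0)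
  -- key measure inequality
  have key : ∀ c : ℝ, μ (Set.Ioi c) ≤ ν (Set.Ioi c) + ENNReal.ofReal D := by
    intro c
    have hsup := le_ciSup hbdd c
    have hμc : (μ (Set.Iic c)).toReal ≤ 1 := htoReal_le_one μ _
    have hνc : (ν (Set.Iic c)).toReal ≤ 1 := htoReal_le_one ν _
    have hIoi : ∀ (m : Measure ℝ) [IsProbabilityMeasure m],
        (m (Set.Ioi c)).toReal = 1 - (m (Set.Iic c)).toReal := by
      intro m _
      rw [← Set.compl_Iic, prob_compl_eq_one_sub measurableSet_Iic,
        ENNReal.toReal_sub_of_le prob_le_one ENNReal.one_ne_top, ENNReal.toReal_one]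
    rw [← ENNReal.toReal_le_toReal (measure_ne_top μ _)
      (ENNReal.add_ne_top.2 ⟨measure_ne_top ν _, ENNReal.ofReal_ne_top⟩),
      ENNReal.toReal_add (measure_ne_top ν _) ENNReal.ofReal_ne_top,
      ENNReal.toReal_ofReal hD0, hIoi μ, hIoi ν]
    have habs : (ν (Set.Iic c)).toReal - (μ (Set.Iic c)).toReal ≤ D := by
      have := neg_abs_le ((μ (Set.Iic c)).toReal - (ν (Set.Iic c)).toReal)
      linarith [hsup]
    linarith
  -- the Stieltjes function associated to u
  set su : StieltjesFunction ℝ :=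
    ⟨u, hu_mono, fun x => (hu_cont.continuousAt).continuousWithinAt⟩ with hsu
  have hleft : ∀ x : ℝ, Function.leftLim u x = u x := fun x =>
    leftLim_eq_of_tendsto
      ((hu_cont.tendsto x).mono_left nhdsWithin_le_nhds)
  have hIco : ∀ x y : ℝ, su.measure (Set.Ico x y) = ENNReal.ofReal (u y - u x) := by
    intro x y
    rw [StieltjesFunction.measure_Ico]
    show ENNReal.ofReal (Function.leftLim u y - Function.leftLim u x) = _
    rw [hleft, hleft]
  -- Tonelli step
  set T : Set (ℝ × ℝ) := {p | a - lam ≤ p.2 ∧ p.2 < p.1 - lam} with hT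
  have hTmeas : MeasurableSet T :=
    (measurableSet_le measurable_const measurable_snd).inter
      (measurableSet_lt measurable_snd (measurable_fst.sub measurable_const))
  have swap : ∀ (m : Measure ℝ) [IsProbabilityMeasure m],
      ∫⁻ x in Set.Icc a b, ENNReal.ofReal (u (x - lam) - u (a - lam)) ∂m
        = ∫⁻ s, (m.restrict (Set.Icc a b)) {x | (x, s) ∈ T} ∂su.measure := by
    intro m _
    have h1 : ∀ x : ℝ, ENNReal.ofReal (u (x - lam) - u (a - lam))
        = ∫⁻ s, T.indicator (fun _ => 1) (x, s) ∂su.measure := by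
      intro x
      have hsec : (fun s => T.indicator (fun _ => (1:ℝ≥0∞)) (x, s))
          = (Set.Ico (a - lam) (x - lam)).indicator (fun _ => 1) := by
        funext s
        by_cases hs : s ∈ Set.Ico (a - lam) (x - lam)
        · rw [Set.indicator_of_mem hs]
          exact Set.indicator_of_mem (by exact ⟨hs.1, by linarith [hs.2]⟩) _
        · rw [Set.indicator_of_notMem hs]
          refine Set.indicator_of_notMem ?_ _
          intro hmem
          exact hs ⟨hmem.1, by simpa using sub_lt_sub_right hmem.2 0⟩
      simp only [hsec, lintegral_indicator measurableSet_Ico]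
      simp [hIco]
    simp_rw [h1]
    rw [lintegral_lintegral_swap (f := fun x s => T.indicator (fun _ => (1:ℝ≥0∞)) (x, s))
      ((measurable_one.indicator hTmeas).aemeasurable)]
    congr 1
    funext s
    have heq : ∫⁻ x, T.indicator (fun _ => (1:ℝ≥0∞)) (x, s) ∂(m.restrict (Set.Icc a b))
        = ∫⁻ x, ((fun x : ℝ => (x, s)) ⁻¹' T).indicator (fun _ => (1:ℝ≥0∞)) x
            ∂(m.restrict (Set.Icc a b)) := by
      refine lintegral_congr fun x => ?_
      by_cases hx : (x, s) ∈ T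
      · rw [Set.indicator_of_mem hx,
          Set.indicator_of_mem (show x ∈ (fun x : ℝ => (x, s)) ⁻¹' T from hx)]
      · rw [Set.indicator_of_notMem hx,
          Set.indicator_of_notMem (show x ∉ (fun x : ℝ => (x, s)) ⁻¹' T from hx)]
    rw [heq, lintegral_indicator (hTmeas.preimage measurable_prodMk_right),
      setLIntegral_one]
    rfl
  -- pointwise bound on sections
  have hsec_bound : ∀ s : ℝ,
      (μ.restrict (Set.Icc a b)) {x | (x, s) ∈ T}
        ≤ (ν.restrict (Set.Icc a b)) {x | (x, s) ∈ T}
          + (Set.Ico (a - lam) (b - lam)).indicator (fun _ => ENNReal.ofReal D) s := by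
    intro s
    have hcompl : ∀ (m : Measure ℝ) [IsProbabilityMeasure m], m (Set.Icc a b) = 1 →
        m (Set.Icc a b)ᶜ = 0 := by
      intro m _ hm
      have := prob_compl_eq_one_sub (μ := m) (measurableSet_Icc (a := a) (b := b))
      rw [hm] at this
      simpa using this
    by_cases hs1 : a - lam ≤ s
    · by_cases hs2 : s < b - lam
      · have hset : {x : ℝ | (x, s) ∈ T} = Set.Ioi (s + lam) := by
          ext x
          simp only [hT, Set.mem_setOf_eq, Set.mem_Ioi]
          constructor
          · intro h; linarith [h.2]
          · intro h; exact ⟨hs1, by linarith⟩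
        have hres : ∀ (m : Measure ℝ) [IsProbabilityMeasure m], m (Set.Icc a b) = 1 →
            (m.restrict (Set.Icc a b)) {x | (x, s) ∈ T} = m (Set.Ioi (s + lam)) := by
          intro m _ hm
          rw [hset, Measure.restrict_apply measurableSet_Ioi]
          exact measure_inter_conull (hcompl m hm)
        rw [hres μ hμ, hres ν hν,
          Set.indicator_of_mem (by exact ⟨hs1, hs2⟩ : s ∈ Set.Ico (a - lam) (b - lam))]
        exact key (s + lam)
      · have hzero : (μ.restrict (Set.Icc a b)) {x | (x, s) ∈ T} = 0 := by
          rw [Measure.restrict_apply' measurableSet_Icc]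
          refine measure_mono_null ?_ (measure_empty (μ := μ))
          rintro x ⟨⟨_, hx2⟩, _, hxb⟩
          exact absurd rfl (by push_neg at hs2; intro _; linarith : x ≠ x)
        rw [hzero]; exact zero_le
    · have hzero : (μ.restrict (Set.Icc a b)) {x | (x, s) ∈ T} = 0 := by
        rw [Measure.restrict_apply' measurableSet_Icc]
        refine measure_mono_null ?_ (measure_empty (μ := μ))
        rintro x ⟨⟨hx1, _⟩, _⟩
        exact absurd hx1 hs1
      rw [hzero]; exact zero_le
  -- combine: lintegral bound
  set Aμ : ℝ≥0∞ := ∫⁻ x in Set.Icc a b, ENNReal.ofReal (u (x - lam) - u (a - lam)) ∂μ with hAμ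
  set Aν : ℝ≥0∞ := ∫⁻ x in Set.Icc a b, ENNReal.ofReal (u (x - lam) - u (a - lam)) ∂ν with hAν
  have hbound : Aμ ≤ Aν + ENNReal.ofReal (u (b - lam) - u (a - lam)) * ENNReal.ofReal D := by
    rw [hAμ, hAν, swap μ, swap ν]
    calc ∫⁻ s, (μ.restrict (Set.Icc a b)) {x | (x, s) ∈ T} ∂su.measure
        ≤ ∫⁻ s, ((ν.restrict (Set.Icc a b)) {x | (x, s) ∈ T}
            + (Set.Ico (a - lam) (b - lam)).indicator (fun _ => ENNReal.ofReal D) s)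
            ∂su.measure := lintegral_mono hsec_bound
      _ = (∫⁻ s, (ν.restrict (Set.Icc a b)) {x | (x, s) ∈ T} ∂su.measure)
            + ∫⁻ s, (Set.Ico (a - lam) (b - lam)).indicator (fun _ => ENNReal.ofReal D) s
              ∂su.measure := by
          rw [lintegral_add_right]
          exact measurable_const.indicator measurableSet_Ico
      _ = (∫⁻ s, (ν.restrict (Set.Icc a b)) {x | (x, s) ∈ T} ∂su.measure)
            + ENNReal.ofReal (u (b - lam) - u (a - lam)) * ENNReal.ofReal D := by
          rw [lintegral_indicator measurableSet_Ico]
          simp [hIco, mul_comm]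
  -- finiteness
  have hfin : ∀ (m : Measure ℝ) [IsProbabilityMeasure m],
      (∫⁻ x in Set.Icc a b, ENNReal.ofReal (u (x - lam) - u (a - lam)) ∂m) ≠ ⊤ := by
    intro m _
    have hle : (∫⁻ x in Set.Icc a b, ENNReal.ofReal (u (x - lam) - u (a - lam)) ∂m)
        ≤ ∫⁻ _ in Set.Icc a b, ENNReal.ofReal (u (b - lam) - u (a - lam)) ∂m := by
      refine setLIntegral_mono measurable_const ?_
      intro x hx
      exact ENNReal.ofReal_le_ofReal (by
        have := hu_mono (sub_le_sub_right hx.2 lam); linarith)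
    refine ne_of_lt (lt_of_le_of_lt hle ?_)
    rw [setLIntegral_const]
    exact ENNReal.mul_lt_top ENNReal.ofReal_lt_top (measure_lt_top m _)
  -- expressing the integrals
  have hrepr : ∀ (m : Measure ℝ) [IsProbabilityMeasure m], m (Set.Icc a b) = 1 →
      ∫ x in Set.Icc a b, u (x - lam) ∂m
        = u (a - lam) + (∫⁻ x in Set.Icc a b,
            ENNReal.ofReal (u (x - lam) - u (a - lam)) ∂m).toReal := by
    intro m _ hm
    have hint : IntegrableOn (fun x => u (x - lam) - u (a - lam)) (Set.Icc a b) m := by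
      refine Measure.integrableOn_of_bounded (measure_ne_top m _)
        ((hu_cont.comp (continuous_id.sub continuous_const)).sub
          continuous_const).aestronglyMeasurable
        (M := |u (b - lam) - u (a - lam)|) ?_
      filter_upwards [ae_restrict_mem measurableSet_Icc] with x hx
      have h1 : u (a - lam) ≤ u (x - lam) := hu_mono (by linarith [hx.1])
      have h2 : u (x - lam) ≤ u (b - lam) := hu_mono (by linarith [hx.2])
      rw [Real.norm_eq_abs, abs_of_nonneg (by linarith), abs_of_nonneg (by linarith)]
      linarith
    have hnn : 0 ≤ᵐ[m.restrict (Set.Icc a b)] fun x => u (x - lam) - u (a - lam) := by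
      filter_upwards [ae_restrict_mem measurableSet_Icc] with x hx
      have := hu_mono (show a - lam ≤ x - lam by linarith [hx.1])
      show (0:ℝ) ≤ u (x - lam) - u (a - lam)
      linarith
    have hofReal := ofReal_integral_eq_lintegral_ofReal hint hnn
    have hIccReal : (m (Set.Icc a b)).toReal = 1 := by rw [hm]; simp
    have hInn : 0 ≤ ∫ x in Set.Icc a b, (u (x - lam) - u (a - lam)) ∂m :=
      integral_nonneg_of_ae hnn
    rw [← hofReal, ENNReal.toReal_ofReal hInn]
    have hint2 : IntegrableOn (fun _ : ℝ => u (a - lam)) (Set.Icc a b) m :=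
      integrableOn_const (measure_ne_top m _)
    have : ∫ x in Set.Icc a b, u (x - lam) ∂m
        = ∫ x in Set.Icc a b, ((u (x - lam) - u (a - lam)) + u (a - lam)) ∂m := by
      congr 1; funext x; ring
    rw [this, integral_add hint hint2, integral_const, measureReal_restrict_apply_univ, measureReal_def, hIccReal,
      one_smul]
    ring
  rw [hrepr μ hμ, hrepr ν hν]
  have hΔ0 : 0 ≤ u (b - lam) - u (a - lam) :=
    sub_nonneg.2 (hu_mono (by linarith))
  have htoReal_bound : Aμ.toReal ≤ Aν.toReal + (u (b - lam) - u (a - lam)) * D := by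
    have h1 : Aμ.toReal ≤ (Aν + ENNReal.ofReal (u (b - lam) - u (a - lam))
        * ENNReal.ofReal D).toReal := by
      refine ENNReal.toReal_mono ?_ hbound
      exact ENNReal.add_ne_top.2 ⟨hfin ν, ENNReal.mul_ne_top ENNReal.ofReal_ne_top
        ENNReal.ofReal_ne_top⟩
    rw [ENNReal.toReal_add (hfin ν) (ENNReal.mul_ne_top ENNReal.ofReal_ne_top
      ENNReal.ofReal_ne_top), ENNReal.toReal_mul, ENNReal.toReal_ofReal hΔ0,
      ENNReal.toReal_ofReal hD0] at h1
    exact h1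
  rw [← hAμ, ← hAν]
  linarith
end

section
/- Let a ≤ b be real numbers and let u : ℝ → ℝ be nondecreasing and concave (hence continuous) with u(0) = 0. For a Borel probability measure μ supported on [a,b], define the optimized certainty equivalent C_u(μ) = sup_{λ ∈ [a,b]} ( λ + ∫_{[a,b]} u(x − λ) dμ(x) ). Then for all Borel probability measures μ, ν supported on [a,b] with CDFs F_μ, F_ν: C_u(μ) − C_u(ν) ≤ (−u(a − b)) · sup_{t∈ℝ} |F_μ(t) − F_ν(t)|. -/
open MeasureTheory Set

/-- Concave increment inequality: increments over intervals of the same length decrease. -/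
lemma concave_increment_aux {u : ℝ → ℝ} (hu : ConcaveOn ℝ Set.univ u)
    {s₁ s₂ L : ℝ} (h12 : s₁ ≤ s₂) (hL : 0 ≤ L) :
    u (s₂ + L) + u s₁ ≤ u (s₁ + L) + u s₂ := by
  have hd0 : 0 ≤ s₂ - s₁ := by linarith
  rcases eq_or_lt_of_le (add_nonneg hd0 hL) with h | h
  · have h1 : s₁ = s₂ := by linarith
    have h2 : L = 0 := by linarith
    rw [h1, h2]
  · set d := s₂ - s₁ with hd
    set p := L / (d + L) with hp'
    set q := d / (d + L) with hq'
    have hne : d + L ≠ 0 := ne_of_gt h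
    have hp : 0 ≤ p := div_nonneg hL h.le
    have hq : 0 ≤ q := div_nonneg hd0 h.le
    have hpq : p + q = 1 := by
      rw [hp', hq', ← add_div, add_comm L d]
      exact div_self hne
    have h1 : p * u s₁ + q * u (s₂ + L) ≤ u s₂ := by
      have key := hu.2 (mem_univ s₁) (mem_univ (s₂ + L)) hp hq hpq
      have e : p • s₁ + q • (s₂ + L) = s₂ := by
        simp only [smul_eq_mul, hp', hq', hd]
        field_simp [show s₂ - s₁ + L ≠ 0 from hne]
        ring
      rw [e] at key
      simpa using key
    have h2 : q * u s₁ + p * u (s₂ + L) ≤ u (s₁ + L) := by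
      have key := hu.2 (mem_univ s₁) (mem_univ (s₂ + L)) hq hp (by linarith)
      have e : q • s₁ + p • (s₂ + L) = s₁ + L := by
        simp only [smul_eq_mul, hp', hq', hd]
        field_simp [show s₂ - s₁ + L ≠ 0 from hne]
        ring
      rw [e] at key
      simpa using key
    have hsum : u s₁ + u (s₂ + L) ≤ u s₂ + u (s₁ + L) := by
      calc u s₁ + u (s₂ + L) = (p + q) * u s₁ + (p + q) * u (s₂ + L) := by rw [hpq]; ring
        _ = (p * u s₁ + q * u (s₂ + L)) + (q * u s₁ + p * u (s₂ + L)) := by ring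
        _ ≤ u s₂ + u (s₁ + L) := add_le_add h1 h2
    linarith

/-- Layer cake representation over `Ioc 0 (G b)` for a monotone continuous `G` with `G a = 0`,
for a probability measure supported on `[a,b]`. -/
lemma layercake_aux (a b : ℝ) (G : ℝ → ℝ) (hG : Monotone G) (hGc : Continuous G)
    (hGa : G a = 0) (ρ : Measure ℝ) [IsProbabilityMeasure ρ] (hρ : ρ (Set.Icc a b) = 1) :
    ∫ x in Set.Icc a b, G x ∂ρ
      = ∫ t in Set.Ioc 0 (G b), (ρ.restrict (Set.Icc a b) {x | t < G x}).toReal := by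
  have hInt : Integrable G (ρ.restrict (Set.Icc a b)) :=
    hGc.continuousOn.integrableOn_compact isCompact_Icc
  have hnn : 0 ≤ᵐ[ρ.restrict (Set.Icc a b)] G := by
    filter_upwards [ae_restrict_mem measurableSet_Icc] with x hx
    have : G a ≤ G x := hG hx.1
    simpa [hGa] using this
  rw [show (∫ x in Set.Icc a b, G x ∂ρ) = ∫ x, G x ∂(ρ.restrict (Set.Icc a b)) from rfl,
    hInt.integral_eq_integral_meas_lt hnn]
  rw [setIntegral_eq_of_subset_of_ae_diff_eq_zero nullMeasurableSet_Ioi Ioc_subset_Ioi_self ?_]; rfl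
  apply Filter.Eventually.of_forall
  intro t ht
  have htb : G b < t := by
    simp only [mem_diff, mem_Ioi, mem_Ioc, not_and, not_le] at ht
    exact ht.2 ht.1
  have hsub : {x | t < G x} ⊆ Set.Ioi b := by
    intro x hx
    by_contra h
    simp only [mem_Ioi, not_lt] at h
    exact absurd (lt_of_le_of_lt (hG h) htb) (not_lt.mpr (le_of_lt hx))
  have h0 : ρ.restrict (Set.Icc a b) {x | t < G x} = 0 := by
    apply measure_mono_null hsub
    rw [Measure.restrict_apply measurableSet_Ioi]
    have : Set.Ioi b ∩ Set.Icc a b = ∅ := by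
      ext x; simp only [mem_inter_iff, mem_Ioi, mem_Icc, mem_empty_iff_false, iff_false]
      rintro ⟨h1, _, h3⟩; linarith
    rw [this, measure_empty]
  rw [measureReal_def, h0, ENNReal.toReal_zero]

/-- Key inequality: difference of integrals of a monotone continuous function against two
probability measures on `[a,b]` is controlled by `G b` times the sup CDF distance. -/
lemma integral_diff_le_aux (a b : ℝ) (hab : a ≤ b) (G : ℝ → ℝ) (hG : Monotone G)
    (hGc : Continuous G) (hGa : G a = 0)
    (μ ν : Measure ℝ) [IsProbabilityMeasure μ] [IsProbabilityMeasure ν]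
    (hμ : μ (Set.Icc a b) = 1) (hν : ν (Set.Icc a b) = 1)
    (D : ℝ) (hD0 : 0 ≤ D)
    (hDle : ∀ c : ℝ, (ν (Set.Iic c)).toReal - (μ (Set.Iic c)).toReal ≤ D) :
    (∫ x in Set.Icc a b, G x ∂μ) - ∫ x in Set.Icc a b, G x ∂ν ≤ G b * D := by
  have hGb0 : 0 ≤ G b := by rw [← hGa]; exact hG hab
  set fμ : ℝ → ℝ := fun t => (μ.restrict (Set.Icc a b) {x | t < G x}).toReal with hfμ
  set fν : ℝ → ℝ := fun t => (ν.restrict (Set.Icc a b) {x | t < G x}).toReal with hfν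
  -- integrability of the layercake integrands
  have measaux : ∀ (ρ : Measure ℝ) [IsProbabilityMeasure ρ],
      IntegrableOn (fun t => (ρ.restrict (Set.Icc a b) {x | t < G x}).toReal)
        (Set.Ioc 0 (G b)) volume := by
    intro ρ _
    apply Integrable.mono' (g := fun _ => (1 : ℝ))
      ((integrableOn_const_iff enorm_ne_top).mpr (Or.inr measure_Ioc_lt_top))
    · have hanti : Antitone fun t => (ρ.restrict (Set.Icc a b) {x | t < G x}).toReal := by
        intro s t hst
        exact ENNReal.toReal_mono (measure_ne_top _ _)
          (measure_mono (fun x hx => lt_of_le_of_lt hst hx))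
      exact (hanti.measurable).aestronglyMeasurable
    · apply Filter.Eventually.of_forall
      intro t
      rw [Real.norm_eq_abs, abs_of_nonneg ENNReal.toReal_nonneg]
      calc (ρ.restrict (Set.Icc a b) {x | t < G x}).toReal
          ≤ (ρ.restrict (Set.Icc a b) Set.univ).toReal :=
            ENNReal.toReal_mono (measure_ne_top _ _) (measure_mono (subset_univ _))
        _ ≤ 1 := by
            rw [Measure.restrict_apply_univ]
            exact ENNReal.toReal_le_of_le_ofReal one_pos.le (by simpa using prob_le_one)
  have hintμ := measaux μ
  have hintν := measaux ν
  -- pointwise bound on (0, ∞)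
  have ray : ∀ t : ℝ, 0 < t → fμ t - fν t ≤ D := by
    intro t ht
    set S := {x : ℝ | t < G x} with hS
    have hSmeas : MeasurableSet S := (isOpen_lt continuous_const hGc).measurableSet
    have hSopen : IsOpen S := isOpen_lt continuous_const hGc
    have hSsub : S ⊆ Set.Ioi a := by
      intro x hx
      by_contra h
      simp only [mem_Ioi, not_lt] at h
      have : G x ≤ 0 := hGa ▸ hG h
      exact absurd (lt_of_lt_of_le hx this) (not_lt.mpr ht.le)
    rcases S.eq_empty_or_nonempty with hSe | hSne
    · have h1 : fμ t = 0 := by simp [hfμ, ← hS, hSe]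
      have h2 : 0 ≤ fν t := ENNReal.toReal_nonneg
      linarith
    · have hbdd : BddBelow S := ⟨a, fun x hx => (hSsub hx).le⟩
      set c := sInf S with hc
      have hcS : c ∉ S := by
        intro hcmem
        obtain ⟨ε, hε, hball⟩ := Metric.isOpen_iff.1 hSopen c hcmem
        have hmem : c - ε / 2 ∈ S := by
          apply hball
          rw [Metric.mem_ball, Real.dist_eq]
          rw [abs_of_nonpos (by linarith)]
          linarith
        have := csInf_le hbdd hmem
        linarith
      have hSeq : S = Set.Ioi c := by
        ext x
        constructor
        · intro hx
          rcases eq_or_lt_of_le (csInf_le hbdd hx) with h | h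
          · rw [← h] at hx
            exact absurd hx hcS
          · exact h
        · intro hx
          obtain ⟨y, hyS, hyx⟩ := exists_lt_of_csInf_lt hSne hx
          exact lt_of_lt_of_le hyS (hG hyx.le)
      have apply_ray : ∀ (ρ : Measure ℝ) [IsProbabilityMeasure ρ], ρ (Set.Icc a b) = 1 →
          (ρ.restrict (Set.Icc a b) S).toReal = 1 - (ρ (Set.Iic c)).toReal := by
        intro ρ _ hρ
        have hcompl : ρ (Set.Icc a b)ᶜ = 0 := by
          rw [prob_compl_eq_one_sub measurableSet_Icc, hρ, tsub_self]
        rw [hSeq, Measure.restrict_apply measurableSet_Ioi, measure_inter_conull hcompl]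
        have : Set.Ioi c = (Set.Iic c)ᶜ := by rw [compl_Iic]
        rw [this, prob_compl_eq_one_sub measurableSet_Iic,
          ENNReal.toReal_sub_of_le prob_le_one ENNReal.one_ne_top, ENNReal.toReal_one]
      rw [hfμ, hfν]
      simp only [← hS]
      rw [apply_ray μ hμ, apply_ray ν hν]
      have := hDle c
      linarith
  -- assemble
  rw [layercake_aux a b G hG hGc hGa μ hμ, layercake_aux a b G hG hGc hGa ν hν,
    ← integral_sub hintμ hintν]
  calc ∫ t in Set.Ioc 0 (G b), (fμ t - fν t)
      ≤ ∫ _t in Set.Ioc 0 (G b), D := by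
        apply setIntegral_mono_on (hintμ.sub hintν)
          ((integrableOn_const_iff enorm_ne_top).mpr (Or.inr measure_Ioc_lt_top)) measurableSet_Ioc
        intro t htmem
        exact ray t htmem.1
    _ = G b * D := by
        rw [setIntegral_const, Real.volume_real_Ioc_of_le (by linarith),
          smul_eq_mul, sub_zero]

/-- The optimized certainty equivalent (OCE) of a Borel probability measure `μ`
supported on `[a, b]`, associated with utility function `u`:
`C_u(μ) = sup_{λ ∈ [a,b]} (λ + ∫_{[a,b]} u (x - λ) dμ(x))`. -/
noncomputable def OCE (u : ℝ → ℝ) (a b : ℝ) (μ : Measure ℝ) : ℝ :=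
  ⨆ lam : Set.Icc a b, ((lam : ℝ) + ∫ x in Set.Icc a b, u (x - (lam : ℝ)) ∂μ)

/-- Lipschitz continuity of the OCE with concave utility with respect to the supremum
distance of CDFs, with Lipschitz constant `-u (a - b)`. -/
theorem oce_concave_lipschitz_sup
    (a b : ℝ) (hab : a ≤ b) (u : ℝ → ℝ) (hu_mono : Monotone u)
    (hu_conc : ConcaveOn ℝ Set.univ u) (hu0 : u 0 = 0)
    (μ ν : Measure ℝ) [IsProbabilityMeasure μ] [IsProbabilityMeasure ν]
    (hμ : μ (Set.Icc a b) = 1) (hν : ν (Set.Icc a b) = 1) :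
    OCE u a b μ - OCE u a b ν ≤
      (-u (a - b)) * ⨆ t : ℝ, |(μ (Set.Iic t)).toReal - (ν (Set.Iic t)).toReal| := by
  have hu_cont : Continuous u := by
    rw [← continuousOn_univ]
    exact hu_conc.continuousOn isOpen_univ
  set D := ⨆ t : ℝ, |(μ (Set.Iic t)).toReal - (ν (Set.Iic t)).toReal| with hD
  have hbddD : BddAbove (Set.range fun t : ℝ =>
      |(μ (Set.Iic t)).toReal - (ν (Set.Iic t)).toReal|) := by
    refine ⟨1, ?_⟩
    rintro _ ⟨t, rfl⟩
    have h1 : (μ (Set.Iic t)).toReal ≤ 1 :=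
      ENNReal.toReal_le_of_le_ofReal one_pos.le (by simpa using prob_le_one)
    have h2 : (ν (Set.Iic t)).toReal ≤ 1 :=
      ENNReal.toReal_le_of_le_ofReal one_pos.le (by simpa using prob_le_one)
    have h3 : (0:ℝ) ≤ (μ (Set.Iic t)).toReal := ENNReal.toReal_nonneg
    have h4 : (0:ℝ) ≤ (ν (Set.Iic t)).toReal := ENNReal.toReal_nonneg
    rw [abs_le]
    constructor <;> linarith
  have hD0 : 0 ≤ D := le_trans (abs_nonneg _) (le_ciSup hbddD 0)
  have hDle : ∀ c : ℝ, (ν (Set.Iic c)).toReal - (μ (Set.Iic c)).toReal ≤ D := by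
    intro c
    refine le_trans (le_abs_self _) ?_
    rw [abs_sub_comm]
    exact le_ciSup hbddD c
  haveI : Nonempty (Set.Icc a b) := (Set.nonempty_Icc.mpr hab).to_subtype
  -- per-λ inequality
  have key : ∀ lam : Set.Icc a b,
      ((lam : ℝ) + ∫ x in Set.Icc a b, u (x - (lam : ℝ)) ∂μ)
        ≤ ((lam : ℝ) + ∫ x in Set.Icc a b, u (x - (lam : ℝ)) ∂ν) + (-u (a - b)) * D := by
    intro lam
    obtain ⟨l, hl⟩ := lam
    simp only
    set G : ℝ → ℝ := fun x => u (x - l) - u (a - l) with hG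
    have hGmono : Monotone G := fun x y hxy => by
      simp only [hG]
      have := hu_mono (by linarith : x - l ≤ y - l)
      linarith
    have hGcont : Continuous G := by
      apply Continuous.sub _ continuous_const
      exact hu_cont.comp (continuous_id.sub continuous_const)
    have hGa : G a = 0 := by simp [hG]
    have hintc : ∀ (ρ : Measure ℝ) [IsProbabilityMeasure ρ],
        IntegrableOn (fun x => u (x - l)) (Set.Icc a b) ρ := by
      intro ρ _
      exact (hu_cont.comp (continuous_id.sub continuous_const)).continuousOn.integrableOn_compact
        isCompact_Icc
    have hGint : ∀ (ρ : Measure ℝ) [IsProbabilityMeasure ρ], ρ (Set.Icc a b) = 1 →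
        (∫ x in Set.Icc a b, G x ∂ρ) = (∫ x in Set.Icc a b, u (x - l) ∂ρ) - u (a - l) := by
      intro ρ _ hρ
      rw [hG]
      rw [integral_sub (hintc ρ) ((integrableOn_const_iff enorm_ne_top).mpr (Or.inr (by rw [hρ]; exact ENNReal.one_lt_top))),
        setIntegral_const, measureReal_def, hρ, ENNReal.toReal_one, one_smul]
    have h2 := integral_diff_le_aux a b hab G hGmono hGcont hGa μ ν hμ hν D hD0 hDle
    rw [hGint μ hμ, hGint ν hν] at h2
    have h3 : G b ≤ -u (a - b) := by
      have hkey := concave_increment_aux hu_conc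
        (show a - b ≤ a - l by linarith [hl.2]) (show (0:ℝ) ≤ b - a by linarith)
      have e1 : a - l + (b - a) = b - l := by ring
      have e2 : a - b + (b - a) = 0 := by ring
      rw [e1, e2, hu0] at hkey
      simp only [hG]
      linarith
    have h4 : G b * D ≤ (-u (a - b)) * D := mul_le_mul_of_nonneg_right h3 hD0
    linarith
  -- bdd above of ν-family
  have hbddν : BddAbove (Set.range fun lam : Set.Icc a b =>
      ((lam : ℝ) + ∫ x in Set.Icc a b, u (x - (lam : ℝ)) ∂ν)) := by
    refine ⟨b + u (b - a), ?_⟩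
    rintro _ ⟨⟨l, hl⟩, rfl⟩
    simp only
    have hint1 : IntegrableOn (fun x => u (x - l)) (Set.Icc a b) ν :=
      (hu_cont.comp (continuous_id.sub continuous_const)).continuousOn.integrableOn_compact
        isCompact_Icc
    have hint2 : IntegrableOn (fun _ => u (b - a)) (Set.Icc a b) ν :=
      (integrableOn_const_iff enorm_ne_top).mpr (Or.inr (by rw [hν]; exact ENNReal.one_lt_top))
    have hmono : ∫ x in Set.Icc a b, u (x - l) ∂ν ≤ ∫ _x in Set.Icc a b, u (b - a) ∂ν := by
      apply setIntegral_mono_on hint1 hint2 measurableSet_Icc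
      intro x hx
      exact hu_mono (by cases hx; cases hl; linarith)
    rw [setIntegral_const, measureReal_def, hν, ENNReal.toReal_one, one_smul] at hmono
    linarith [hl.2]
  have hfinal : OCE u a b μ ≤ OCE u a b ν + (-u (a - b)) * D := by
    rw [OCE]
    apply ciSup_le
    intro lam
    exact le_trans (key lam) (add_le_add_left (le_ciSup hbddν lam) _)
  linarith
end

section
/- Let a ≤ b be real numbers and let u : ℝ → ℝ be nondecreasing and convex (hence continuous) with u(0) = 0. For a Borel probability measure μ supported on [a,b], define the optimized certainty equivalent C_u(μ) = sup_{λ ∈ [a,b]} ( λ + ∫_{[a,b]} u(x − λ) dμ(x) ). Then for all Borel probability measures μ, ν supported on [a,b] with CDFs F_μ, F_ν: C_u(μ) − C_u(ν) ≤ u(b − a) · sup_{t∈ℝ} |F_μ(t) − F_ν(t)|. -/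
open MeasureTheory

open Set Filter Topology
open scoped ENNReal

/-- Convex increments: `u (y + L) - u y ≤ u L - u 0` when `y ≤ 0 ≤ L`. -/
lemma oce_aux_conv_incr {u : ℝ → ℝ} (hu : ConvexOn ℝ Set.univ u) {y L : ℝ}
    (hy : y ≤ 0) (hL : 0 ≤ L) : u (y + L) - u y ≤ u L - u 0 := by
  rcases hL.eq_or_lt with rfl | hL'
  · simp
  rcases eq_or_lt_of_le hy with rfl | hy'
  · simp
  have h1 : (u (y + L) - u y) / ((y + L) - y) ≤ (u L - u y) / (L - y) :=
    hu.secant_mono (mem_univ y) (mem_univ _) (mem_univ _)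
      (lt_add_of_pos_right y hL').ne' (hy'.trans hL').ne' (by linarith)
  have h2 : (u y - u L) / (y - L) ≤ (u 0 - u L) / (0 - L) :=
    hu.secant_mono (mem_univ L) (mem_univ _) (mem_univ _)
      (hy'.trans hL').ne hL'.ne hy
  have e1 : (u y - u L) / (y - L) = (u L - u y) / (L - y) := by
    rw [← neg_sub (u L) (u y), ← neg_sub L y, neg_div_neg_eq]
  have e2 : (u 0 - u L) / (0 - L) = (u L - u 0) / L := by
    rw [← neg_sub (u L) (u 0), ← neg_sub L 0, neg_div_neg_eq, sub_zero]
  have h3 : (u (y + L) - u y) / L ≤ (u L - u 0) / L := by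
    have : (y + L) - y = L := by ring
    rw [this] at h1
    calc (u (y + L) - u y) / L ≤ (u L - u y) / (L - y) := h1
      _ = (u y - u L) / (y - L) := e1.symm
      _ ≤ (u 0 - u L) / (0 - L) := h2
      _ = (u L - u 0) / L := e2
  have := (div_le_div_iff₀ hL' hL').mp h3
  exact le_of_mul_le_mul_right this hL'

/-- The `Iio` CDF difference is bounded by the sup of `Iic` CDF differences. -/
lemma oce_aux_iio_le {μ ν : Measure ℝ} [IsProbabilityMeasure μ] [IsProbabilityMeasure ν]
    {D : ℝ} (hD : ∀ s : ℝ, (μ (Iic s)).toReal - (ν (Iic s)).toReal ≤ D) (t : ℝ) :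
    (μ (Iio t)).toReal - (ν (Iio t)).toReal ≤ D := by
  set s : ℕ → Set ℝ := fun n => Iic (t - 1 / (n + 1)) with hs
  have hmono : Monotone s := by
    intro n m hnm
    apply Iic_subset_Iic.2
    have h1 : (1 : ℝ) / (m + 1) ≤ 1 / (n + 1) := by
      apply one_div_le_one_div_of_le (by positivity)
      exact_mod_cast add_le_add_left (Nat.cast_le.2 hnm) 1
    linarith
  have hUnion : ⋃ n, s n = Iio t := by
    ext x
    simp only [hs, mem_iUnion, mem_Iic, mem_Iio]
    constructor
    · rintro ⟨n, hn⟩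
      have : (0 : ℝ) < 1 / (n + 1) := by positivity
      linarith
    · intro hx
      obtain ⟨n, hn⟩ := exists_nat_one_div_lt (sub_pos.2 hx)
      exact ⟨n, by linarith⟩
  have hμt : Tendsto (fun n => (μ (s n)).toReal) atTop (𝓝 (μ (Iio t)).toReal) := by
    have h := tendsto_measure_iUnion_atTop (μ := μ) hmono
    rw [hUnion] at h
    exact (ENNReal.tendsto_toReal (measure_ne_top _ _)).comp h
  have hνt : Tendsto (fun n => (ν (s n)).toReal) atTop (𝓝 (ν (Iio t)).toReal) := by
    have h := tendsto_measure_iUnion_atTop (μ := ν) hmono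
    rw [hUnion] at h
    exact (ENNReal.tendsto_toReal (measure_ne_top _ _)).comp h
  exact le_of_tendsto (hμt.sub hνt) (Eventually.of_forall fun n => hD _)

/-- Representation of the truncated integral via the Stieltjes measure of `x ↦ u (x - l)`. -/
lemma oce_aux_rep (a b : ℝ) (u : ℝ → ℝ) (hu_mono : Monotone u) (hcont : Continuous u)
    (l : ℝ) (γ : StieltjesFunction ℝ) (hγ : ∀ x, γ x = u (x - l))
    (μ : Measure ℝ) [IsProbabilityMeasure μ] (hμ : μ (Set.Icc a b) = 1) :
    ∫ x in Icc a b, u (x - l) ∂μ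
      = u (a - l) + (∫⁻ t in Ioc a b, μ (Icc t b) ∂γ.measure).toReal := by
  have hcont' : Continuous fun x : ℝ => u (x - l) :=
    hcont.comp (continuous_id.sub continuous_const)
  have hint : IntegrableOn (fun x => u (x - l)) (Icc a b) μ :=
    hcont'.integrableOn_Icc
  -- reduce to nonnegative integrand
  have hconst : IntegrableOn (fun _ : ℝ => u (a - l)) (Icc a b) μ :=
    integrableOn_const (measure_ne_top _ _)
  have step1 : ∫ x in Icc a b, (u (x - l) - u (a - l)) ∂μ
      = ∫ x in Icc a b, u (x - l) ∂μ - u (a - l) := by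
    rw [integral_sub hint hconst, setIntegral_const, measureReal_def, hμ]
    simp
  have step2 : ∫ x in Icc a b, (u (x - l) - u (a - l)) ∂μ
      = (∫⁻ x in Icc a b, ENNReal.ofReal (u (x - l) - u (a - l)) ∂μ).toReal := by
    apply integral_eq_lintegral_of_nonneg_ae
    · filter_upwards [ae_restrict_mem measurableSet_Icc] with x hx
      exact sub_nonneg.2 (hu_mono (by linarith [hx.1]))
    · exact (hcont'.sub continuous_const).aestronglyMeasurable
  -- Stieltjes measure of Ioc a x
  have step3 : ∫⁻ x in Icc a b, ENNReal.ofReal (u (x - l) - u (a - l)) ∂μ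
      = ∫⁻ x in Icc a b, γ.measure (Ioc a x) ∂μ := by
    refine lintegral_congr fun x => ?_
    rw [γ.measure_Ioc, hγ, hγ]
  -- indicator function set-up
  set f : ℝ → ℝ → ℝ≥0∞ := fun x t => if t ≤ x then 1 else 0 with hf
  have step4 : ∫⁻ x in Icc a b, γ.measure (Ioc a x) ∂μ
      = ∫⁻ x in Icc a b, ∫⁻ t in Ioc a b, f x t ∂γ.measure ∂μ := by
    refine setLIntegral_congr_fun measurableSet_Icc (fun x hx => ?_)
    have hset : Ioc a x = Iic x ∩ Ioc a b := by
      ext z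
      simp only [mem_Ioc, mem_inter_iff, mem_Iic]
      constructor
      · rintro ⟨h1, h2⟩; exact ⟨h2, h1, h2.trans hx.2⟩
      · rintro ⟨h1, h2, _⟩; exact ⟨h2, h1⟩
    have : ∫⁻ t in Ioc a b, f x t ∂γ.measure
        = ∫⁻ t in Ioc a b, (Iic x).indicator (fun _ => 1) t ∂γ.measure := by
      refine lintegral_congr fun t => ?_
      simp only [hf, Set.indicator_apply, mem_Iic]
    rw [this, lintegral_indicator measurableSet_Iic, setLIntegral_one,
      Measure.restrict_apply measurableSet_Iic, ← hset]
  have hswap : ∫⁻ x in Icc a b, ∫⁻ t in Ioc a b, f x t ∂γ.measure ∂μ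
      = ∫⁻ t in Ioc a b, ∫⁻ x in Icc a b, f x t ∂μ ∂γ.measure := by
    apply lintegral_lintegral_swap
    have : Function.uncurry f = fun p : ℝ × ℝ => if p.2 ≤ p.1 then (1 : ℝ≥0∞) else 0 := rfl
    rw [this]
    exact (Measurable.ite (measurableSet_le measurable_snd measurable_fst)
      measurable_const measurable_const).aemeasurable
  have step5 : ∫⁻ t in Ioc a b, ∫⁻ x in Icc a b, f x t ∂μ ∂γ.measure
      = ∫⁻ t in Ioc a b, μ (Icc t b) ∂γ.measure := by
    refine setLIntegral_congr_fun measurableSet_Ioc (fun t ht => ?_)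
    have : ∫⁻ x in Icc a b, f x t ∂μ
        = ∫⁻ x in Icc a b, (Ici t).indicator (fun _ => 1) x ∂μ := by
      refine lintegral_congr fun x => ?_
      simp only [hf, Set.indicator_apply, mem_Ici]
    rw [this, lintegral_indicator measurableSet_Ici, setLIntegral_one,
      Measure.restrict_apply measurableSet_Ici]
    congr 1
    ext z
    simp only [mem_inter_iff, mem_Ici, mem_Icc]
    constructor
    · rintro ⟨h1, _, h3⟩; exact ⟨h1, h3⟩
    · rintro ⟨h1, h2⟩; exact ⟨h1, ht.1.le.trans h1, h2⟩
  have := step1.symm.trans (step2.trans (by rw [step3, step4, hswap, step5]))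
  linarith [this]

/-- Key bound: pointwise (in `l`) comparison of the truncated integrals. -/
lemma oce_aux_key (a b : ℝ) (hab : a ≤ b) (u : ℝ → ℝ) (hu_mono : Monotone u)
    (hu_conv : ConvexOn ℝ Set.univ u) (hu0 : u 0 = 0) (hcont : Continuous u)
    (μ ν : Measure ℝ) [IsProbabilityMeasure μ] [IsProbabilityMeasure ν]
    (hμ : μ (Set.Icc a b) = 1) (hν : ν (Set.Icc a b) = 1)
    {D : ℝ} (hD0 : 0 ≤ D)
    (hD : ∀ s : ℝ, |(μ (Iic s)).toReal - (ν (Iic s)).toReal| ≤ D)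
    {l : ℝ} (hl : l ∈ Icc a b) :
    ∫ x in Icc a b, u (x - l) ∂μ - ∫ x in Icc a b, u (x - l) ∂ν ≤ u (b - a) * D := by
  have hcont' : Continuous fun x : ℝ => u (x - l) :=
    hcont.comp (continuous_id.sub continuous_const)
  set γ : StieltjesFunction ℝ :=
    { toFun := fun x => u (x - l)
      mono' := fun x y hxy => hu_mono (by linarith)
      right_continuous' := fun x => hcont'.continuousWithinAt } with hγdef
  have hγ : ∀ x, γ x = u (x - l) := fun x => rfl
  have repμ := oce_aux_rep a b u hu_mono hcont l γ hγ μ hμ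
  have repν := oce_aux_rep a b u hu_mono hcont l γ hγ ν hν
  -- finite measure on Ioc a b
  have hγfin : γ.measure (Ioc a b) ≠ ⊤ := by
    rw [γ.measure_Ioc]; exact ENNReal.ofReal_ne_top
  have hfinres : IsFiniteMeasure (γ.measure.restrict (Ioc a b)) := by
    constructor
    rw [Measure.restrict_apply_univ]
    exact lt_top_iff_ne_top.2 hγfin
  -- convert lintegrals to real integrals
  have hmeasμ : Measurable fun t => (μ (Icc t b)).toReal := by
    apply Antitone.measurable
    intro t t' htt'
    exact ENNReal.toReal_le_toReal (measure_ne_top _ _) (measure_ne_top _ _)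
      |>.2 (measure_mono (Icc_subset_Icc_left htt'))
  have hmeasν : Measurable fun t => (ν (Icc t b)).toReal := by
    apply Antitone.measurable
    intro t t' htt'
    exact ENNReal.toReal_le_toReal (measure_ne_top _ _) (measure_ne_top _ _)
      |>.2 (measure_mono (Icc_subset_Icc_left htt'))
  have htoμ : (∫⁻ t in Ioc a b, μ (Icc t b) ∂γ.measure).toReal
      = ∫ t in Ioc a b, (μ (Icc t b)).toReal ∂γ.measure := by
    rw [integral_toReal]
    · exact (Antitone.measurable fun t t' htt' =>
        measure_mono (Icc_subset_Icc_left htt')).aemeasurable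
    · exact ae_of_all _ fun t => measure_lt_top _ _
  have htoν : (∫⁻ t in Ioc a b, ν (Icc t b) ∂γ.measure).toReal
      = ∫ t in Ioc a b, (ν (Icc t b)).toReal ∂γ.measure := by
    rw [integral_toReal]
    · exact (Antitone.measurable fun t t' htt' =>
        measure_mono (Icc_subset_Icc_left htt')).aemeasurable
    · exact ae_of_all _ fun t => measure_lt_top _ _
  -- integrability of the real-valued functions
  have hintμ : IntegrableOn (fun t => (μ (Icc t b)).toReal) (Ioc a b) γ.measure := by
    refine Integrable.mono' (integrable_const 1) hmeasμ.aestronglyMeasurable ?_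
    refine ae_of_all _ fun t => ?_
    rw [Real.norm_eq_abs, abs_of_nonneg ENNReal.toReal_nonneg]
    exact ENNReal.toReal_le_of_le_ofReal zero_le_one (by simpa using prob_le_one)
  have hintν : IntegrableOn (fun t => (ν (Icc t b)).toReal) (Ioc a b) γ.measure := by
    refine Integrable.mono' (integrable_const 1) hmeasν.aestronglyMeasurable ?_
    refine ae_of_all _ fun t => ?_
    rw [Real.norm_eq_abs, abs_of_nonneg ENNReal.toReal_nonneg]
    exact ENNReal.toReal_le_of_le_ofReal zero_le_one (by simpa using prob_le_one)
  -- pointwise bound on Ioc a b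
  have hIic : ∀ (σ : Measure ℝ), IsProbabilityMeasure σ → σ (Set.Icc a b) = 1 →
      ∀ t ∈ Ioc a b, (σ (Icc t b)).toReal = 1 - (σ (Iio t)).toReal := by
    intro σ hσp hσ t ht
    have hdisj : Disjoint (Iio t) (Icc t b) :=
      (Iio_disjoint_Ici le_rfl).mono_right Icc_subset_Ici_self
    have hunion : Iio t ∪ Icc t b = Iic b := by
      ext z
      simp only [mem_union, mem_Iio, mem_Icc, mem_Iic]
      constructor
      · rintro (h | ⟨_, h⟩)
        · linarith [ht.2]
        · exact h
      · intro h
        rcases lt_or_ge z t with h' | h'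
        · exact Or.inl h'
        · exact Or.inr ⟨h', h⟩
    have hb : σ (Iic b) = 1 := by
      refine le_antisymm prob_le_one ?_
      rw [← hσ]
      exact measure_mono (Icc_subset_Iic_self)
    have hadd : σ (Iio t) + σ (Icc t b) = 1 := by
      rw [← measure_union hdisj measurableSet_Icc, hunion, hb]
    have := congrArg ENNReal.toReal hadd
    rw [ENNReal.toReal_add (measure_ne_top _ _) (measure_ne_top _ _)] at this
    simp only [ENNReal.toReal_one] at this
    linarith
  have hpt : ∀ t ∈ Ioc a b,
      (μ (Icc t b)).toReal - (ν (Icc t b)).toReal ≤ D := by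
    intro t ht
    rw [hIic μ ‹_› hμ t ht, hIic ν ‹_› hν t ht]
    have hsw : ∀ s : ℝ, (ν (Iic s)).toReal - (μ (Iic s)).toReal ≤ D := fun s => by
      have h := abs_le.1 (hD s)
      linarith [h.1]
    have := oce_aux_iio_le (μ := ν) (ν := μ) hsw t
    linarith
  -- put everything together
  rw [repμ, repν, htoμ, htoν]
  have hdiff : ∫ t in Ioc a b, (μ (Icc t b)).toReal ∂γ.measure
      - ∫ t in Ioc a b, (ν (Icc t b)).toReal ∂γ.measure
      = ∫ t in Ioc a b, ((μ (Icc t b)).toReal - (ν (Icc t b)).toReal) ∂γ.measure :=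
    (integral_sub hintμ hintν).symm
  have hbound : ∫ t in Ioc a b, ((μ (Icc t b)).toReal - (ν (Icc t b)).toReal) ∂γ.measure
      ≤ ∫ _t in Ioc a b, D ∂γ.measure := by
    refine setIntegral_mono_on (hintμ.sub hintν) (integrableOn_const (lt_top_iff_ne_top.1 ?_))
      measurableSet_Ioc hpt
    exact lt_top_iff_ne_top.2 hγfin
  have hconstint : ∫ _t in Ioc a b, D ∂γ.measure = (γ.measure (Ioc a b)).toReal * D := by
    rw [setIntegral_const]; rfl
  have h0 : (0 : ℝ) ≤ γ b - γ a := by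
    show (0 : ℝ) ≤ u (b - l) - u (a - l)
    have : a - l ≤ b - l := by linarith
    exact sub_nonneg.2 (hu_mono this)
  have hγval : (γ.measure (Ioc a b)).toReal = u (b - l) - u (a - l) := by
    rw [γ.measure_Ioc, ENNReal.toReal_ofReal h0]
  have hincr : u (b - l) - u (a - l) ≤ u (b - a) := by
    have := oce_aux_conv_incr hu_conv (y := a - l) (L := b - a)
      (by linarith [hl.1]) (by linarith)
    have he : a - l + (b - a) = b - l := by ring
    rw [he, hu0] at this
    linarith
  calc u (a - l) + ∫ t in Ioc a b, (μ (Icc t b)).toReal ∂γ.measure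
        - (u (a - l) + ∫ t in Ioc a b, (ν (Icc t b)).toReal ∂γ.measure)
      = ∫ t in Ioc a b, ((μ (Icc t b)).toReal - (ν (Icc t b)).toReal) ∂γ.measure := by
        rw [← hdiff]; ring
    _ ≤ (γ.measure (Ioc a b)).toReal * D := by rw [← hconstint]; exact hbound
    _ = (u (b - l) - u (a - l)) * D := by rw [hγval]
    _ ≤ u (b - a) * D := mul_le_mul_of_nonneg_right hincr hD0

/-- Lipschitz continuity of the OCE with convex utility with respect to the supremum
distance of CDFs, with Lipschitz constant `u (b - a)`. -/
theorem oce_convex_lipschitz_sup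
    (a b : ℝ) (hab : a ≤ b) (u : ℝ → ℝ) (hu_mono : Monotone u)
    (hu_conv : ConvexOn ℝ Set.univ u) (hu0 : u 0 = 0)
    (μ ν : Measure ℝ) [IsProbabilityMeasure μ] [IsProbabilityMeasure ν]
    (hμ : μ (Set.Icc a b) = 1) (hν : ν (Set.Icc a b) = 1) :
    OCE u a b μ - OCE u a b ν ≤
      u (b - a) * ⨆ t : ℝ, |(μ (Set.Iic t)).toReal - (ν (Set.Iic t)).toReal| := by
  have hcont : Continuous u := continuousOn_univ.1 (hu_conv.continuousOn isOpen_univ)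
  set D := ⨆ t : ℝ, |(μ (Set.Iic t)).toReal - (ν (Set.Iic t)).toReal| with hDdef
  have hbddD : BddAbove (Set.range fun t : ℝ =>
      |(μ (Set.Iic t)).toReal - (ν (Set.Iic t)).toReal|) := by
    refine ⟨1, ?_⟩
    rintro x ⟨t, rfl⟩
    have h1 : (μ (Set.Iic t)).toReal ≤ 1 :=
      ENNReal.toReal_le_of_le_ofReal zero_le_one (by simpa using prob_le_one)
    have h2 : (ν (Set.Iic t)).toReal ≤ 1 :=
      ENNReal.toReal_le_of_le_ofReal zero_le_one (by simpa using prob_le_one)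
    have h3 : 0 ≤ (μ (Set.Iic t)).toReal := ENNReal.toReal_nonneg
    have h4 : 0 ≤ (ν (Set.Iic t)).toReal := ENNReal.toReal_nonneg
    rw [abs_le]; constructor <;> linarith
  have hDle : ∀ t : ℝ, |(μ (Set.Iic t)).toReal - (ν (Set.Iic t)).toReal| ≤ D :=
    fun t => le_ciSup hbddD t
  have hD0 : 0 ≤ D := le_trans (abs_nonneg _) (hDle 0)
  have hne : Nonempty (Set.Icc a b) := Set.nonempty_Icc.2 hab |>.to_subtype
  -- bounded above for the ν-suprema
  have hint : ∀ (σ : Measure ℝ), IsProbabilityMeasure σ →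
      ∀ l : ℝ, IntegrableOn (fun x => u (x - l)) (Set.Icc a b) σ := by
    intro σ hσ l
    exact (hcont.comp (continuous_id.sub continuous_const)).integrableOn_Icc
  have hbddν : BddAbove (Set.range fun lam : Set.Icc a b =>
      ((lam : ℝ) + ∫ x in Set.Icc a b, u (x - (lam : ℝ)) ∂ν)) := by
    refine ⟨b + u (b - a), ?_⟩
    rintro x ⟨⟨l, hl⟩, rfl⟩
    have hb1 : ∫ x in Set.Icc a b, u (x - l) ∂ν ≤ ∫ _x in Set.Icc a b, u (b - a) ∂ν := by
      refine setIntegral_mono_on (hint ν ‹_› l)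
        (integrableOn_const (measure_ne_top _ _)) measurableSet_Icc ?_
      intro x hx
      exact hu_mono (by simp at hx hl ⊢; linarith [hx.1, hx.2, hl.1, hl.2])
    have hb2 : ∫ _x in Set.Icc a b, u (b - a) ∂ν = u (b - a) := by
      rw [setIntegral_const, measureReal_def, hν]; simp
    have : (l : ℝ) ≤ b := hl.2
    simp only []
    rw [hb2] at hb1
    linarith
  rw [sub_le_iff_le_add, OCE, OCE]
  refine ciSup_le fun lam => ?_
  obtain ⟨l, hl⟩ := lam
  have hkey := oce_aux_key a b hab u hu_mono hu_conv hu0 hcont μ ν hμ hν hD0 hDle hl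
  have hle : (l : ℝ) + ∫ x in Set.Icc a b, u (x - l) ∂μ
      ≤ ((l : ℝ) + ∫ x in Set.Icc a b, u (x - l) ∂ν) + u (b - a) * D := by linarith
  refine hle.trans ?_
  have := le_ciSup hbddν ⟨l, hl⟩
  linarith
end

section
/- Let a ≤ b be real numbers and let u : ℝ → ℝ be differentiable, nondecreasing (so u′ ≥ 0), and concave (so u′ is nonincreasing), with u(0) = 0. For a Borel probability measure μ supported on [a,b], define the optimized certainty equivalent C_u(μ) = sup_{λ ∈ [a,b]} ( λ + ∫_{[a,b]} u(x − λ) dμ(x) ). Then for all Borel probability measures μ, ν supported on [a,b] with CDFs F_μ, F_ν: C_u(μ) − C_u(ν) ≤ u′(a − b) · ∫_ℝ |F_μ(t) − F_ν(t)| dt. -/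
open MeasureTheory

section auxOCE

open Set

variable {a b : ℝ} {u : ℝ → ℝ}

variable {a b : ℝ} {u : ℝ → ℝ}

lemma deriv_nonneg_of_mono (hu_diff : Differentiable ℝ u) (hu_mono : Monotone u)
    (hu_conc : ConcaveOn ℝ Set.univ u) (x : ℝ) : 0 ≤ deriv u x := by
  have h := hu_conc.slope_le_deriv (mem_univ x) (mem_univ (x + 1))
    (by linarith) (hu_diff x)
  refine le_trans ?_ h
  rw [slope_def_field]
  apply div_nonneg
  · exact sub_nonneg.2 (hu_mono (by linarith))
  · linarith

lemma deriv_anti (hu_diff : Differentiable ℝ u) (hu_conc : ConcaveOn ℝ Set.univ u) :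
    Antitone (deriv u) :=
  antitoneOn_univ.mp (hu_conc.antitoneOn_deriv fun x _ => hu_diff x)



lemma oce_repr (hab : a ≤ b) (hu_diff : Differentiable ℝ u)
    (hanti : Antitone (deriv u)) (h0 : ∀ x, 0 ≤ deriv u x)
    (μ : Measure ℝ) [IsProbabilityMeasure μ] (hμ : μ (Set.Icc a b) = 1) (lam : ℝ) :
    ∫ x in Set.Icc a b, u (x - lam) ∂μ
      = u (a - lam)
        + ∫ t in Set.Ico a b, deriv u (t - lam) * (μ (Set.Ioi t ∩ Set.Icc a b)).toReal := by
  set g' : ℝ → ℝ := fun t => deriv u (t - lam) with hg'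
  have hg'anti : Antitone g' := fun s t hst => hanti (sub_le_sub_right hst lam)
  have hg'meas : Measurable g' := (measurable_deriv u).comp (measurable_id.sub_const lam)
  -- FTC pointwise
  have hFTC : ∀ x ∈ Set.Icc a b,
      u (x - lam) = u (a - lam) + ∫ t in Set.Ico a b, (Set.Iio x).indicator g' t := by
    intro x hx
    have hD : ∀ t : ℝ, HasDerivAt (fun s => u (s - lam)) (g' t) t := by
      intro t
      simpa [Function.comp_def] using (hu_diff (t - lam)).hasDerivAt.comp t ((hasDerivAt_id t).sub_const lam)
    have hint : IntervalIntegrable g' volume a x := hg'anti.intervalIntegrable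
    have h1 : ∫ t in a..x, g' t = u (x - lam) - u (a - lam) :=
      intervalIntegral.integral_eq_sub_of_hasDerivAt (fun t _ => hD t) hint
    have h2 : ∫ t in Set.Ico a b, (Set.Iio x).indicator g' t = ∫ t in a..x, g' t := by
      rw [setIntegral_indicator measurableSet_Iio]
      have : Set.Ico a b ∩ Set.Iio x = Set.Ico a x := by
        ext t; simp only [Set.mem_inter_iff, Set.mem_Ico, Set.mem_Iio]
        constructor
        · rintro ⟨⟨h1, _⟩, h2⟩; exact ⟨h1, h2⟩
        · rintro ⟨h1, h2⟩; exact ⟨⟨h1, lt_of_lt_of_le h2 hx.2⟩, h2⟩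
      rw [this, intervalIntegral.integral_of_le hx.1,
        MeasureTheory.integral_Ico_eq_integral_Ioo, MeasureTheory.integral_Ioc_eq_integral_Ioo]
    rw [h2, h1]; ring
  rw [setIntegral_congr_fun measurableSet_Icc hFTC]
  -- integrability of the inner integral as a function of x
  have hg'int : IntegrableOn g' (Set.Ico a b) := by
    refine Integrable.mono' (integrable_const (g' a)) hg'meas.aestronglyMeasurable ?_
    filter_upwards [ae_restrict_mem measurableSet_Ico] with t ht
    rw [Real.norm_eq_abs, abs_of_nonneg (h0 _)]
    exact hg'anti ht.1
  have hFmono : Monotone fun x => ∫ t in Set.Ico a b, (Set.Iio x).indicator g' t := by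
    intro x y hxy
    refine setIntegral_mono_on (hg'int.indicator measurableSet_Iio)
      (hg'int.indicator measurableSet_Iio) measurableSet_Ico ?_
    intro t _
    simp only [Set.indicator_apply, Set.mem_Iio]
    by_cases h : t < x
    · rw [if_pos h, if_pos (lt_of_lt_of_le h hxy)]
    · rw [if_neg h]
      split_ifs with h2
      · exact h0 _
      · exact le_refl 0
  have hFbdd : ∀ x, ‖∫ t in Set.Ico a b, (Set.Iio x).indicator g' t‖
      ≤ ∫ t in Set.Ico a b, g' t := by
    intro x
    refine (norm_integral_le_integral_norm _).trans ?_
    refine setIntegral_mono_on ((hg'int.indicator measurableSet_Iio).norm) hg'int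
      measurableSet_Ico ?_
    intro t _
    rw [Real.norm_eq_abs]
    simp only [Set.indicator_apply, Set.mem_Iio]
    split_ifs with h
    · rw [abs_of_nonneg (h0 _)]
    · rw [abs_zero]; exact h0 _
  have hFint : Integrable (fun x => ∫ t in Set.Ico a b, (Set.Iio x).indicator g' t)
      (μ.restrict (Set.Icc a b)) := by
    refine Integrable.mono' (integrable_const (∫ t in Set.Ico a b, g' t))
      (hFmono.measurable.aestronglyMeasurable) ?_
    exact Filter.Eventually.of_forall hFbdd
  rw [integral_add (integrable_const _) hFint, integral_const,
    measureReal_def, Measure.restrict_apply_univ, hμ]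
  simp only [ENNReal.toReal_one, one_smul]
  congr 1
  -- Fubini
  set H : ℝ × ℝ → ℝ := fun p => ({q : ℝ × ℝ | q.2 < q.1}).indicator (fun q => g' q.2) p with hH
  have hHeq : ∀ x t : ℝ, (Set.Iio x).indicator g' t = H (x, t) := by
    intro x t
    simp only [hH, Set.indicator_apply, Set.mem_Iio, Set.mem_setOf_eq]
  have hHmeas : Measurable H :=
    (hg'meas.comp measurable_snd).indicator (measurableSet_lt measurable_snd measurable_fst)
  have hHint : Integrable H ((μ.restrict (Set.Icc a b)).prod (volume.restrict (Set.Ico a b))) := by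
    refine Integrable.mono' (integrable_const (g' a)) hHmeas.aestronglyMeasurable ?_
    rw [Measure.prod_restrict]
    filter_upwards [ae_restrict_mem (measurableSet_Icc.prod measurableSet_Ico)] with p hp
    rw [Real.norm_eq_abs]
    simp only [hH, Set.indicator_apply, Set.mem_setOf_eq]
    split_ifs with h
    · rw [abs_of_nonneg (h0 _)]
      exact hg'anti hp.2.1
    · rw [abs_zero]; exact h0 _
  calc ∫ x in Set.Icc a b, (∫ t in Set.Ico a b, (Set.Iio x).indicator g' t) ∂μ
      = ∫ x in Set.Icc a b, (∫ t in Set.Ico a b, H (x, t)) ∂μ := by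
        refine integral_congr_ae (Filter.Eventually.of_forall fun x => ?_)
        exact integral_congr_ae (Filter.Eventually.of_forall fun t => hHeq x t)
    _ = ∫ t in Set.Ico a b, (∫ x in Set.Icc a b, H (x, t) ∂μ) := by
        exact integral_integral_swap hHint
    _ = ∫ t in Set.Ico a b, g' t * (μ (Set.Ioi t ∩ Set.Icc a b)).toReal := by
        refine integral_congr_ae (Filter.Eventually.of_forall fun t => ?_)
        have heq : (fun x => H (x, t)) = (Set.Ioi t).indicator (fun _ => g' t) := by
          ext x
          simp only [hH, Set.indicator_apply, Set.mem_setOf_eq, Set.mem_Ioi]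
        show (∫ x in Set.Icc a b, H (x, t) ∂μ) = g' t * (μ (Set.Ioi t ∩ Set.Icc a b)).toReal
        rw [show (fun x => H (x, t)) = (Set.Ioi t).indicator (fun _ => g' t) from heq]
        rw [integral_indicator_const _ measurableSet_Ioi,
          measureReal_def, Measure.restrict_apply measurableSet_Ioi, smul_eq_mul, mul_comm]


lemma compl_null (μ : Measure ℝ) [IsProbabilityMeasure μ] (hμ : μ (Set.Icc a b) = 1) :
    μ (Set.Icc a b)ᶜ = 0 := by
  rw [measure_compl measurableSet_Icc (measure_ne_top μ _), hμ, measure_univ, tsub_self]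

lemma tail_eq (μ : Measure ℝ) [IsProbabilityMeasure μ] (hμ : μ (Set.Icc a b) = 1) (t : ℝ) :
    (μ (Set.Ioi t ∩ Set.Icc a b)).toReal = 1 - (μ (Set.Iic t)).toReal := by
  have h0 : μ (Set.Icc a b)ᶜ = 0 := compl_null μ hμ
  have h1 : μ (Set.Ioi t ∩ Set.Icc a b) = μ (Set.Ioi t) := by
    refine le_antisymm (measure_mono Set.inter_subset_left) ?_
    calc μ (Set.Ioi t) = μ ((Set.Ioi t ∩ Set.Icc a b) ∪ (Set.Ioi t ∩ (Set.Icc a b)ᶜ)) := by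
          rw [← Set.inter_union_distrib_left, Set.union_compl_self, Set.inter_univ]
      _ ≤ μ (Set.Ioi t ∩ Set.Icc a b) + μ (Set.Ioi t ∩ (Set.Icc a b)ᶜ) := measure_union_le _ _
      _ = μ (Set.Ioi t ∩ Set.Icc a b) := by
          rw [measure_mono_null Set.inter_subset_right h0, add_zero]
  rw [h1, ← Set.compl_Iic, measure_compl measurableSet_Iic (measure_ne_top μ _), measure_univ,
    ENNReal.toReal_sub_of_le prob_le_one ENNReal.one_ne_top, ENNReal.toReal_one]

lemma cdf_one (μ : Measure ℝ) [IsProbabilityMeasure μ] (hμ : μ (Set.Icc a b) = 1) {t : ℝ}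
    (ht : b ≤ t) : (μ (Set.Iic t)).toReal = 1 := by
  have : μ (Set.Iic t) = 1 := by
    refine le_antisymm prob_le_one ?_
    rw [← hμ]
    exact measure_mono fun x hx => le_trans hx.2 ht
  rw [this, ENNReal.toReal_one]

lemma cdf_zero (μ : Measure ℝ) [IsProbabilityMeasure μ] (hμ : μ (Set.Icc a b) = 1) {t : ℝ}
    (ht : t < a) : (μ (Set.Iic t)).toReal = 0 := by
  have : μ (Set.Iic t) = 0 := by
    refine measure_mono_null (fun x hx => ?_) (compl_null μ hμ)
    exact fun hc => absurd (le_trans hc.1 hx) (not_le.2 ht)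
  rw [this, ENNReal.toReal_zero]

lemma cdf_monotone (μ : Measure ℝ) [IsProbabilityMeasure μ] :
    Monotone fun t => (μ (Set.Iic t)).toReal := fun s t hst =>
  ENNReal.toReal_mono (measure_ne_top μ _) (measure_mono (Set.Iic_subset_Iic.2 hst))

lemma cdf_le_one (μ : Measure ℝ) [IsProbabilityMeasure μ] (t : ℝ) :
    (μ (Set.Iic t)).toReal ≤ 1 := by
  have := ENNReal.toReal_mono ENNReal.one_ne_top (prob_le_one (μ := μ) (s := Set.Iic t))
  simpa using this

lemma key_ineq (hab : a ≤ b) (hu_diff : Differentiable ℝ u)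
    (hanti : Antitone (deriv u)) (h0 : ∀ x, 0 ≤ deriv u x)
    (μ ν : Measure ℝ) [IsProbabilityMeasure μ] [IsProbabilityMeasure ν]
    (hμ : μ (Set.Icc a b) = 1) (hν : ν (Set.Icc a b) = 1)
    {lam : ℝ} (hlam : lam ∈ Set.Icc a b) :
    (∫ x in Set.Icc a b, u (x - lam) ∂μ) - (∫ x in Set.Icc a b, u (x - lam) ∂ν)
      ≤ deriv u (a - b) * ∫ t : ℝ, |(μ (Set.Iic t)).toReal - (ν (Set.Iic t)).toReal| := by
  set C : ℝ := deriv u (a - b) with hC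
  set g' : ℝ → ℝ := fun t => deriv u (t - lam) with hg'
  have hg'meas : Measurable g' := (measurable_deriv u).comp (measurable_id.sub_const lam)
  set Fμ : ℝ → ℝ := fun t => (μ (Set.Iic t)).toReal with hFμ
  set Fν : ℝ → ℝ := fun t => (ν (Set.Iic t)).toReal with hFν
  have hFμmeas : Measurable Fμ := (cdf_monotone μ).measurable
  have hFνmeas : Measurable Fν := (cdf_monotone ν).measurable
  set Δ : ℝ → ℝ := fun t => |Fμ t - Fν t| with hΔ
  have hΔmeas : Measurable Δ := (hFμmeas.sub hFνmeas).abs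
  have hΔbd : ∀ t, Δ t ≤ 1 := by
    intro t
    rw [hΔ]
    rw [abs_sub_le_iff]
    constructor
    · have h1 := cdf_le_one μ t
      have h2 : 0 ≤ Fν t := ENNReal.toReal_nonneg
      linarith
    · have h1 := cdf_le_one ν t
      have h2 : 0 ≤ Fμ t := ENNReal.toReal_nonneg
      linarith
  -- bound on g' on Ico a b
  have hg'bd : ∀ t ∈ Set.Ico a b, g' t ≤ C := by
    intro t ht
    exact hanti (by simp only [sub_le_sub_iff]; linarith [ht.1, hlam.2])
  have hC0 : 0 ≤ C := h0 _
  -- integrands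
  have hint : ∀ (κ : Measure ℝ) [IsProbabilityMeasure κ],
      IntegrableOn (fun t => g' t * (1 - (κ (Set.Iic t)).toReal)) (Set.Ico a b) := by
    intro κ _
    refine Integrable.mono' (integrable_const C)
      (hg'meas.mul (measurable_const.sub (cdf_monotone κ).measurable)).aestronglyMeasurable ?_
    filter_upwards [ae_restrict_mem measurableSet_Ico] with t ht
    rw [Real.norm_eq_abs, abs_mul]
    have h1 : |g' t| = g' t := abs_of_nonneg (h0 _)
    have h2 : |1 - (κ (Set.Iic t)).toReal| ≤ 1 := by
      rw [abs_le]
      have := cdf_le_one κ t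
      have : (0:ℝ) ≤ (κ (Set.Iic t)).toReal := ENNReal.toReal_nonneg
      constructor <;> [skip; skip] <;> nlinarith [cdf_le_one κ t]
    calc |g' t| * |1 - (κ (Set.Iic t)).toReal| ≤ g' t * 1 := by
          rw [h1]; exact mul_le_mul_of_nonneg_left h2 (h0 _)
      _ ≤ C := by rw [mul_one]; exact hg'bd t ht
  have hΔint : IntegrableOn Δ (Set.Ico a b) := by
    refine Integrable.mono' (integrable_const 1) hΔmeas.aestronglyMeasurable ?_
    filter_upwards with t
    rw [Real.norm_eq_abs, abs_of_nonneg (abs_nonneg _)]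
    exact hΔbd t
  -- rewrite both integrals via the representation
  rw [oce_repr hab hu_diff hanti h0 μ hμ lam, oce_repr hab hu_diff hanti h0 ν hν lam]
  have hrw : ∀ (κ : Measure ℝ) [IsProbabilityMeasure κ], κ (Set.Icc a b) = 1 →
      (∫ t in Set.Ico a b, deriv u (t - lam) * (κ (Set.Ioi t ∩ Set.Icc a b)).toReal)
        = ∫ t in Set.Ico a b, g' t * (1 - (κ (Set.Iic t)).toReal) := by
    intro κ _ hκ
    refine integral_congr_ae (Filter.Eventually.of_forall fun t => ?_)
    show deriv u (t - lam) * (κ (Set.Ioi t ∩ Set.Icc a b)).toReal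
      = g' t * (1 - (κ (Set.Iic t)).toReal)
    rw [tail_eq κ hκ t]
  rw [hrw μ hμ, hrw ν hν]
  have hkey : (∫ t in Set.Ico a b, g' t * (1 - Fμ t)) - ∫ t in Set.Ico a b, g' t * (1 - Fν t)
      ≤ ∫ t in Set.Ico a b, C * Δ t := by
    rw [← integral_sub (hint μ) (hint ν)]
    refine setIntegral_mono_on ((hint μ).sub (hint ν)) (hΔint.const_mul C)
      measurableSet_Ico ?_
    intro t ht
    have e1 : g' t * (1 - Fμ t) - g' t * (1 - Fν t) = g' t * (Fν t - Fμ t) := by ring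
    rw [e1]
    calc g' t * (Fν t - Fμ t) ≤ g' t * Δ t := by
          refine mul_le_mul_of_nonneg_left ?_ (h0 _)
          show Fν t - Fμ t ≤ |Fμ t - Fν t|
          rw [abs_sub_comm]
          exact le_abs_self _
      _ ≤ C * Δ t := mul_le_mul_of_nonneg_right (hg'bd t ht) (abs_nonneg _)
  have hfinal : (∫ t in Set.Ico a b, C * Δ t) = C * ∫ t : ℝ, Δ t := by
    rw [integral_const_mul]
    congr 1
    refine setIntegral_eq_integral_of_forall_compl_eq_zero fun t ht => ?_
    rw [Set.mem_Ico, not_and_or, not_le, not_lt] at ht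
    rcases ht with h | h
    · simp only [hΔ, hFμ, hFν, cdf_zero μ hμ h, cdf_zero ν hν h, sub_zero, abs_zero]
    · simp only [hΔ, hFμ, hFν, cdf_one μ hμ h, cdf_one ν hν h, sub_self, abs_zero]
  have := hkey
  rw [hfinal] at this
  calc u (a - lam) + (∫ t in Set.Ico a b, g' t * (1 - Fμ t))
        - (u (a - lam) + ∫ t in Set.Ico a b, g' t * (1 - Fν t))
      = (∫ t in Set.Ico a b, g' t * (1 - Fμ t)) - ∫ t in Set.Ico a b, g' t * (1 - Fν t) := by
        ring
    _ ≤ C * ∫ t : ℝ, Δ t := this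


end auxOCE

/-- Lipschitz continuity of the OCE with a differentiable, nondecreasing, concave
utility with respect to the ℓ1 distance of CDFs, with Lipschitz constant `u' (a - b)`. -/
theorem oce_concave_lipschitz_l1
    (a b : ℝ) (hab : a ≤ b) (u : ℝ → ℝ) (hu_diff : Differentiable ℝ u)
    (hu_mono : Monotone u) (hu_conc : ConcaveOn ℝ Set.univ u) (hu0 : u 0 = 0)
    (μ ν : Measure ℝ) [IsProbabilityMeasure μ] [IsProbabilityMeasure ν]
    (hμ : μ (Set.Icc a b) = 1) (hν : ν (Set.Icc a b) = 1) :
    OCE u a b μ - OCE u a b ν ≤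
      deriv u (a - b) *
        ∫ t : ℝ, |(μ (Set.Iic t)).toReal - (ν (Set.Iic t)).toReal| := by
  have h0 : ∀ x, 0 ≤ deriv u x := deriv_nonneg_of_mono hu_diff hu_mono hu_conc
  have hanti : Antitone (deriv u) := deriv_anti hu_diff hu_conc
  haveI : Nonempty (Set.Icc a b) := (Set.nonempty_Icc.2 hab).to_subtype
  have hIint : ∀ (κ : Measure ℝ) [IsFiniteMeasure κ] (lam : ℝ), lam ∈ Set.Icc a b →
      IntegrableOn (fun x => u (x - lam)) (Set.Icc a b) κ := by
    intro κ _ lam hlam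
    refine Integrable.mono' (integrable_const (max |u (a - b)| |u (b - a)|))
      ((hu_diff.continuous.comp
        (continuous_id.sub continuous_const)).measurable.aestronglyMeasurable) ?_
    filter_upwards [ae_restrict_mem measurableSet_Icc] with x hx
    rw [Real.norm_eq_abs]
    have h1 : u (a - b) ≤ u (x - lam) := hu_mono (by linarith [hx.1, hlam.2])
    have h2 : u (x - lam) ≤ u (b - a) := hu_mono (by linarith [hx.2, hlam.1])
    exact abs_le_max_abs_abs h1 h2
  have hBdd : ∀ (κ : Measure ℝ) [IsProbabilityMeasure κ], κ (Set.Icc a b) = 1 →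
      BddAbove (Set.range fun lam : Set.Icc a b =>
        ((lam : ℝ) + ∫ x in Set.Icc a b, u (x - (lam : ℝ)) ∂κ)) := by
    intro κ _ hκ
    refine ⟨b + u (b - a), ?_⟩
    rintro y ⟨lam, rfl⟩
    have h1 : (∫ x in Set.Icc a b, u (x - (lam : ℝ)) ∂κ)
        ≤ ∫ _ in Set.Icc a b, u (b - a) ∂κ := by
      refine setIntegral_mono_on (hIint κ lam lam.2) (integrable_const _)
        measurableSet_Icc fun x hx => hu_mono (by linarith [hx.2, lam.2.1])
    have h2 : (∫ _ in Set.Icc a b, u (b - a) ∂κ) = u (b - a) := by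
      rw [setIntegral_const, measureReal_def, hκ, ENNReal.toReal_one, one_smul]
    have h3 := lam.2.2
    show (lam : ℝ) + ∫ x in Set.Icc a b, u (x - (lam : ℝ)) ∂κ ≤ b + u (b - a)
    linarith [h1.trans_eq h2]
  rw [sub_le_iff_le_add, OCE, OCE]
  refine ciSup_le fun lam => ?_
  have hkey := key_ineq hab hu_diff hanti h0 μ ν hμ hν lam.2
  have h2 := le_ciSup (hBdd ν hν) lam
  linarith
end

section
/- Let a ≤ b be real numbers and let β ≠ 0. For a Borel probability measure μ supported on [a,b], define the entropic risk measure U_β(μ) = (1/β) · log( ∫_{[a,b]} exp(βx) dμ(x) ). Then for all Borel probability measures μ, ν supported on [a,b] with CDFs F_μ, F_ν: |U_β(μ) − U_β(ν)| ≤ ((exp(|β|(b − a)) − 1)/|β|) · sup_{t∈ℝ} |F_μ(t) − F_ν(t)|. -/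
open MeasureTheory Set Filter Topology

/-- The entropic risk measure with coefficient `β ≠ 0` of a Borel probability measure
`μ` supported on `[a, b]`: `U_β(μ) = (1/β) log ∫_{[a,b]} exp (β x) dμ(x)`. -/
noncomputable def ERM (β a b : ℝ) (μ : Measure ℝ) : ℝ :=
  (1 / β) * Real.log (∫ x in Set.Icc a b, Real.exp (β * x) ∂μ)

section Aux

variable {μ ν : Measure ℝ} [IsProbabilityMeasure μ] [IsProbabilityMeasure ν]

private lemma toReal_prob_le_one (s : Set ℝ) : (μ s).toReal ≤ 1 := by
  have h := prob_le_one (μ := μ) (s := s)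
  simpa using ENNReal.toReal_mono (by simp) h

private lemma bddD :
    BddAbove (Set.range fun t : ℝ => |(μ (Iic t)).toReal - (ν (Iic t)).toReal|) := by
  refine ⟨1, ?_⟩
  rintro x ⟨t, rfl⟩
  have h1 : (μ (Iic t)).toReal ≤ 1 := toReal_prob_le_one _
  have h2 : (ν (Iic t)).toReal ≤ 1 := toReal_prob_le_one _
  have h3 : 0 ≤ (μ (Iic t)).toReal := ENNReal.toReal_nonneg
  have h4 : 0 ≤ (ν (Iic t)).toReal := ENNReal.toReal_nonneg
  rw [abs_sub_le_iff]
  constructor <;> linarith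

private lemma Iic_le_D (s : ℝ) :
    |(μ (Iic s)).toReal - (ν (Iic s)).toReal| ≤
      ⨆ t : ℝ, |(μ (Iic t)).toReal - (ν (Iic t)).toReal| :=
  le_ciSup bddD s

private lemma Iio_le_D (s : ℝ) :
    |(μ (Iio s)).toReal - (ν (Iio s)).toReal| ≤
      ⨆ t : ℝ, |(μ (Iic t)).toReal - (ν (Iic t)).toReal| := by
  have hU : (⋃ n : ℕ, Iic (s - 1 / (n + 1))) = Iio s := by
    ext x
    simp only [mem_iUnion, mem_Iic, mem_Iio]
    constructor
    · rintro ⟨n, hn⟩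
      have h : (0:ℝ) < 1 / (n + 1) := by positivity
      linarith
    · intro hx
      obtain ⟨n, hn⟩ := exists_nat_one_div_lt (by linarith : (0:ℝ) < s - x)
      exact ⟨n, by push_cast at hn ⊢; linarith⟩
  have hmono : Monotone fun n : ℕ => Iic (s - 1 / (n + 1 : ℝ)) := by
    intro m n hmn
    apply Iic_subset_Iic.mpr
    have h : (1:ℝ) / (n + 1) ≤ 1 / (m + 1) := by
      apply one_div_le_one_div_of_le (by positivity)
      exact_mod_cast Nat.succ_le_succ hmn
    linarith
  have h1 := tendsto_measure_iUnion_atTop (μ := μ) hmono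
  have h2 := tendsto_measure_iUnion_atTop (μ := ν) hmono
  rw [hU] at h1 h2
  have h1' := (ENNReal.tendsto_toReal (measure_ne_top μ _)).comp h1
  have h2' := (ENNReal.tendsto_toReal (measure_ne_top ν _)).comp h2
  have habs := (h1'.sub h2').abs
  exact le_of_tendsto habs (Eventually.of_forall fun n => Iic_le_D _)

private lemma restrict_eq_self {a b : ℝ} (hμ : μ (Icc a b) = 1) {s : Set ℝ}
    (hs : MeasurableSet s) : μ.restrict (Icc a b) s = μ s := by
  rw [Measure.restrict_apply hs]
  apply measure_inter_conull
  have h := prob_compl_eq_one_sub (μ := μ) (measurableSet_Icc (a := a) (b := b))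
  rw [hμ] at h
  simpa using h

end Aux

private lemma exp_between {β a b x : ℝ} (hx : x ∈ Icc a b) :
    min (Real.exp (β * a)) (Real.exp (β * b)) ≤ Real.exp (β * x) ∧
      Real.exp (β * x) ≤ max (Real.exp (β * a)) (Real.exp (β * b)) := by
  rcases le_total 0 β with h | h
  · exact ⟨le_trans (min_le_left _ _) (Real.exp_le_exp.mpr (mul_le_mul_of_nonneg_left hx.1 h)),
      le_trans (Real.exp_le_exp.mpr (mul_le_mul_of_nonneg_left hx.2 h)) (le_max_right _ _)⟩
  · exact ⟨le_trans (min_le_right _ _) (Real.exp_le_exp.mpr (mul_le_mul_of_nonpos_left hx.2 h)),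
      le_trans (Real.exp_le_exp.mpr (mul_le_mul_of_nonpos_left hx.1 h)) (le_max_left _ _)⟩

private lemma hSmeas (β t : ℝ) : MeasurableSet {x : ℝ | t < Real.exp (β * x)} :=
  measurableSet_lt measurable_const (Real.measurable_exp.comp (measurable_id.const_mul β))

private lemma abs_log_sub_log_le {c X Y : ℝ} (hc : 0 < c) (hX : c ≤ X) (hY : c ≤ Y) :
    |Real.log X - Real.log Y| ≤ |X - Y| / c := by
  have key : ∀ U V : ℝ, c ≤ U → c ≤ V → V ≤ U →
      Real.log U - Real.log V ≤ |U - V| / c := by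
    intro U V hU hV hVU
    have hV0 : 0 < V := lt_of_lt_of_le hc hV
    have hU0 : 0 < U := lt_of_lt_of_le hc hU
    have h1 : Real.log U - Real.log V = Real.log (U / V) :=
      (Real.log_div hU0.ne' hV0.ne').symm
    rw [h1, abs_of_nonneg (by linarith : (0:ℝ) ≤ U - V)]
    have h2 : Real.log (U / V) ≤ U / V - 1 := Real.log_le_sub_one_of_pos (by positivity)
    have h3 : U / V - 1 = (U - V) / V := by field_simp
    have h4 : (U - V) / V ≤ (U - V) / c := by gcongr
    linarith
  rcases le_total Y X with h | h
  · rw [abs_of_nonneg]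
    · exact key X Y hX hY h
    · have hY0 : 0 < Y := lt_of_lt_of_le hc hY
      have := (Real.log_le_log_iff hY0 (lt_of_lt_of_le hc hX)).mpr h
      linarith
  · rw [abs_sub_comm, abs_sub_comm X Y, abs_of_nonneg]
    · exact key Y X hY hX h
    · have hX0 : 0 < X := lt_of_lt_of_le hc hX
      have := (Real.log_le_log_iff hX0 (lt_of_lt_of_le hc hY)).mpr h
      linarith

private lemma integral_diff_le (a b : ℝ) (hab : a ≤ b) (β : ℝ) (hβ : β ≠ 0)
    (μ ν : Measure ℝ) [IsProbabilityMeasure μ] [IsProbabilityMeasure ν]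
    (hμ : μ (Icc a b) = 1) (hν : ν (Icc a b) = 1) :
    |(∫ x in Icc a b, Real.exp (β * x) ∂μ) - ∫ x in Icc a b, Real.exp (β * x) ∂ν| ≤
      (⨆ t : ℝ, |(μ (Iic t)).toReal - (ν (Iic t)).toReal|) *
        (max (Real.exp (β * a)) (Real.exp (β * b)) -
          min (Real.exp (β * a)) (Real.exp (β * b))) := by
  set c := min (Real.exp (β * a)) (Real.exp (β * b)) with hc_def
  set d := max (Real.exp (β * a)) (Real.exp (β * b)) with hd_def
  set D := ⨆ t : ℝ, |(μ (Iic t)).toReal - (ν (Iic t)).toReal| with hD_def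
  have hc : 0 < c := lt_min (Real.exp_pos _) (Real.exp_pos _)
  have hcd : c ≤ d := min_le_max
  have hD0 : 0 ≤ D := le_trans (abs_nonneg _) (Iic_le_D (μ := μ) (ν := ν) 0)
  haveI hPμ' : IsProbabilityMeasure (μ.restrict (Icc a b)) :=
    ⟨by rw [Measure.restrict_apply_univ, hμ]⟩
  haveI hPν' : IsProbabilityMeasure (ν.restrict (Icc a b)) :=
    ⟨by rw [Measure.restrict_apply_univ, hν]⟩
  set g : ℝ → ℝ := fun t => ((μ.restrict (Icc a b)) {x | t < Real.exp (β * x)}).toReal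
    with hg_def
  set gν : ℝ → ℝ := fun t => ((ν.restrict (Icc a b)) {x | t < Real.exp (β * x)}).toReal
    with hgν_def
  have hcont : Continuous fun x : ℝ => Real.exp (β * x) :=
    Real.continuous_exp.comp (continuous_const.mul continuous_id)
  have hintμ : IntegrableOn (fun x => Real.exp (β * x)) (Icc a b) μ :=
    hcont.continuousOn.integrableOn_compact isCompact_Icc
  have hintν : IntegrableOn (fun x => Real.exp (β * x)) (Icc a b) ν :=
    hcont.continuousOn.integrableOn_compact isCompact_Icc
  have hX : (∫ x in Icc a b, Real.exp (β * x) ∂μ) = ∫ t in Ioi 0, g t :=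
    Integrable.integral_eq_integral_meas_lt hintμ
      (Eventually.of_forall fun x => (Real.exp_pos _).le)
  have hY : (∫ x in Icc a b, Real.exp (β * x) ∂ν) = ∫ t in Ioi 0, gν t :=
    Integrable.integral_eq_integral_meas_lt hintν
      (Eventually.of_forall fun x => (Real.exp_pos _).le)
  -- tail function facts
  have tail_zero : ∀ (ρ : Measure ℝ), ∀ t : ℝ, d ≤ t →
      (ρ.restrict (Icc a b)) {x | t < Real.exp (β * x)} = 0 := by
    intro ρ t ht
    rw [Measure.restrict_apply (hSmeas β t)]
    have hempty : {x | t < Real.exp (β * x)} ∩ Icc a b = ∅ := by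
      ext x
      simp only [mem_inter_iff, mem_setOf_eq, mem_empty_iff_false, iff_false, not_and]
      intro hx1 hx2
      exact absurd (lt_of_le_of_lt ht hx1) (not_lt.mpr (exp_between hx2).2)
    rw [hempty, measure_empty]
  have tail_one : ∀ (ρ : Measure ℝ), ρ (Icc a b) = 1 → ∀ t : ℝ, t < c →
      (ρ.restrict (Icc a b)) {x | t < Real.exp (β * x)} = 1 := by
    intro ρ hρ t ht
    rw [Measure.restrict_apply (hSmeas β t)]
    have hsub : Icc a b ⊆ {x | t < Real.exp (β * x)} := fun x hx =>
      lt_of_lt_of_le ht (exp_between hx).1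
    rw [Set.inter_eq_self_of_subset_right hsub, hρ]
  have gAnti : Antitone g := fun s t hst =>
    ENNReal.toReal_mono (measure_ne_top _ _)
      (measure_mono fun x hx => lt_of_le_of_lt hst hx)
  have gνAnti : Antitone gν := fun s t hst =>
    ENNReal.toReal_mono (measure_ne_top _ _)
      (measure_mono fun x hx => lt_of_le_of_lt hst hx)
  have hIndInt : Integrable (Set.indicator (Ioc 0 d) fun _ => (1:ℝ))
      (volume.restrict (Ioi 0)) := by
    refine Integrable.restrict ?_
    rw [integrable_indicator_iff measurableSet_Ioc]
    exact (integrableOn_const_iff (by simp)).mpr (Or.inr measure_Ioc_lt_top)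
  have gBound : ∀ (h : ℝ → ℝ), Antitone h → (∀ t, 0 ≤ h t) → (∀ t, h t ≤ 1) →
      (∀ t, d ≤ t → h t = 0) → IntegrableOn h (Ioi 0) volume := by
    intro h hAnti h0 h1 hz
    refine Integrable.mono' hIndInt hAnti.measurable.aestronglyMeasurable ?_
    rw [ae_restrict_iff' measurableSet_Ioi]
    refine Eventually.of_forall fun t ht => ?_
    rw [Real.norm_eq_abs, abs_of_nonneg (h0 t)]
    rcases le_total t d with htd | htd
    · have : t ∈ Ioc 0 d := ⟨ht, htd⟩
      rw [Set.indicator_of_mem this]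
      exact h1 t
    · have : t ∉ Ioc 0 d ∨ t = d := by
        rcases eq_or_lt_of_le htd with h' | h'
        · exact Or.inr h'.symm
        · exact Or.inl fun hmem => absurd hmem.2 (not_le.mpr h')
      rcases this with h' | h'
      · rw [Set.indicator_of_notMem h', hz t htd]
      · rw [hz t htd]
        exact Set.indicator_nonneg (fun _ _ => zero_le_one) t
  have gInt : IntegrableOn g (Ioi 0) volume := by
    refine gBound g gAnti (fun t => ENNReal.toReal_nonneg) (fun t => toReal_prob_le_one _)
      (fun t ht => ?_)
    rw [hg_def]
    simp only
    rw [tail_zero μ t ht, ENNReal.toReal_zero]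
  have gνInt : IntegrableOn gν (Ioi 0) volume := by
    refine gBound gν gνAnti (fun t => ENNReal.toReal_nonneg) (fun t => toReal_prob_le_one _)
      (fun t ht => ?_)
    rw [hgν_def]
    simp only
    rw [tail_zero ν t ht, ENNReal.toReal_zero]
  have hptbd : ∀ t ∈ Ioi 0, |g t - gν t| ≤ Set.indicator (Ico c d) (fun _ => D) t := by
    intro t ht
    simp only [mem_Ioi] at ht
    by_cases h1 : t < c
    · have e1 : g t = 1 := by
        rw [hg_def]; simp only; rw [tail_one μ hμ t h1, ENNReal.toReal_one]
      have e2 : gν t = 1 := by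
        rw [hgν_def]; simp only; rw [tail_one ν hν t h1, ENNReal.toReal_one]
      rw [e1, e2, sub_self, abs_zero]
      exact Set.indicator_nonneg (fun _ _ => hD0) t
    · by_cases h2 : d ≤ t
      · have e1 : g t = 0 := by
          rw [hg_def]; simp only; rw [tail_zero μ t h2, ENNReal.toReal_zero]
        have e2 : gν t = 0 := by
          rw [hgν_def]; simp only; rw [tail_zero ν t h2, ENNReal.toReal_zero]
        rw [e1, e2, sub_self, abs_zero]
        exact Set.indicator_nonneg (fun _ _ => hD0) t
      · have hmem : t ∈ Ico c d := ⟨not_lt.mp h1, not_le.mp h2⟩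
        rw [Set.indicator_of_mem hmem]
        set s := Real.log t / β with hs_def
        rcases hβ.lt_or_gt with hneg | hpos
        · have hset : {x : ℝ | t < Real.exp (β * x)} = Iio s := by
            ext x
            simp only [mem_setOf_eq, mem_Iio, hs_def]
            rw [← Real.log_lt_iff_lt_exp ht, lt_div_iff_of_neg hneg, mul_comm]
          have e1 : g t = (μ (Iio s)).toReal := by
            rw [hg_def]; simp only; rw [hset, restrict_eq_self hμ measurableSet_Iio]
          have e2 : gν t = (ν (Iio s)).toReal := by
            rw [hgν_def]; simp only; rw [hset, restrict_eq_self hν measurableSet_Iio]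
          rw [e1, e2]
          exact Iio_le_D s
        · have hset : {x : ℝ | t < Real.exp (β * x)} = Ioi s := by
            ext x
            simp only [mem_setOf_eq, mem_Ioi, hs_def]
            rw [← Real.log_lt_iff_lt_exp ht, div_lt_iff₀ hpos, mul_comm]
          have hcompl : (Iic s)ᶜ = Ioi s := compl_Iic
          have e1 : g t = 1 - (μ (Iic s)).toReal := by
            rw [hg_def]; simp only
            rw [hset, restrict_eq_self hμ measurableSet_Ioi, ← hcompl,
              prob_compl_eq_one_sub measurableSet_Iic,
              ENNReal.toReal_sub_of_le prob_le_one ENNReal.one_ne_top, ENNReal.toReal_one]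
          have e2 : gν t = 1 - (ν (Iic s)).toReal := by
            rw [hgν_def]; simp only
            rw [hset, restrict_eq_self hν measurableSet_Ioi, ← hcompl,
              prob_compl_eq_one_sub measurableSet_Iic,
              ENNReal.toReal_sub_of_le prob_le_one ENNReal.one_ne_top, ENNReal.toReal_one]
          rw [e1, e2]
          have : (1 - (μ (Iic s)).toReal) - (1 - (ν (Iic s)).toReal) =
              -((μ (Iic s)).toReal - (ν (Iic s)).toReal) := by ring
          rw [this, abs_neg]
          exact Iic_le_D s
  have hIndInt2 : IntegrableOn (Set.indicator (Ico c d) fun _ => D) (Ioi 0) volume := by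
    refine Integrable.restrict ?_
    rw [integrable_indicator_iff measurableSet_Ico]
    exact (integrableOn_const_iff (by simp)).mpr (Or.inr measure_Ico_lt_top)
  calc |(∫ x in Icc a b, Real.exp (β * x) ∂μ) - ∫ x in Icc a b, Real.exp (β * x) ∂ν|
      = |∫ t in Ioi 0, (g t - gν t)| := by rw [hX, hY, integral_sub gInt gνInt]
    _ ≤ ∫ t in Ioi 0, |g t - gν t| := by
        simpa [Real.norm_eq_abs] using
          norm_integral_le_integral_norm (μ := volume.restrict (Ioi 0)) fun t => g t - gν t
    _ ≤ ∫ t in Ioi 0, Set.indicator (Ico c d) (fun _ => D) t :=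
        setIntegral_mono_on ((gInt.sub gνInt).abs) hIndInt2 measurableSet_Ioi hptbd
    _ = D * (d - c) := by
        rw [integral_indicator measurableSet_Ico, Measure.restrict_restrict measurableSet_Ico]
        have hss : Ico c d ∩ Ioi 0 = Ico c d := by
          apply Set.inter_eq_self_of_subset_left
          intro x hx
          exact lt_of_lt_of_le hc hx.1
        rw [hss, setIntegral_const, Real.volume_real_Ico_of_le hcd,
          smul_eq_mul, mul_comm]

/-- Lipschitz continuity of the entropic risk measure with respect to the supremum
distance of CDFs, with Lipschitz constant `(exp (|β| (b - a)) - 1) / |β|`. -/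
theorem erm_lipschitz_sup
    (a b : ℝ) (hab : a ≤ b) (β : ℝ) (hβ : β ≠ 0)
    (μ ν : Measure ℝ) [IsProbabilityMeasure μ] [IsProbabilityMeasure ν]
    (hμ : μ (Set.Icc a b) = 1) (hν : ν (Set.Icc a b) = 1) :
    |ERM β a b μ - ERM β a b ν| ≤
      ((Real.exp (|β| * (b - a)) - 1) / |β|) *
        ⨆ t : ℝ, |(μ (Set.Iic t)).toReal - (ν (Set.Iic t)).toReal| := by
  set c := min (Real.exp (β * a)) (Real.exp (β * b)) with hc_def
  set d := max (Real.exp (β * a)) (Real.exp (β * b)) with hd_def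
  set D := ⨆ t : ℝ, |(μ (Iic t)).toReal - (ν (Iic t)).toReal| with hD_def
  set X := ∫ x in Icc a b, Real.exp (β * x) ∂μ with hX_def
  set Y := ∫ x in Icc a b, Real.exp (β * x) ∂ν with hY_def
  have hc : 0 < c := lt_min (Real.exp_pos _) (Real.exp_pos _)
  have hD0 : 0 ≤ D := le_trans (abs_nonneg _) (Iic_le_D (μ := μ) (ν := ν) 0)
  have hβ0 : 0 < |β| := abs_pos.mpr hβ
  have hcont : Continuous fun x : ℝ => Real.exp (β * x) :=
    Real.continuous_exp.comp (continuous_const.mul continuous_id)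
  have hlow : ∀ (ρ : Measure ℝ) [IsProbabilityMeasure ρ], ρ (Icc a b) = 1 →
      c ≤ ∫ x in Icc a b, Real.exp (β * x) ∂ρ := by
    intro ρ _ hρ
    have h1 : (∫ _x in Icc a b, c ∂ρ) ≤ ∫ x in Icc a b, Real.exp (β * x) ∂ρ := by
      refine setIntegral_mono_on ((integrableOn_const_iff (by simp)).mpr (Or.inr ?_))
        (hcont.continuousOn.integrableOn_compact isCompact_Icc) measurableSet_Icc
        (fun x hx => (exp_between hx).1)
      rw [hρ]; exact ENNReal.one_lt_top
    have h2 : (∫ _x in Icc a b, c ∂ρ) = c := by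
      rw [setIntegral_const, measureReal_def, hρ, ENNReal.toReal_one, one_smul]
    linarith
  have hXc : c ≤ X := hlow μ hμ
  have hYc : c ≤ Y := hlow ν hν
  have hlog : |Real.log X - Real.log Y| ≤ |X - Y| / c := abs_log_sub_log_le hc hXc hYc
  have hXY : |X - Y| ≤ D * (d - c) := integral_diff_le a b hab β hβ μ ν hμ hν
  have hdc : d = c * Real.exp (|β| * (b - a)) := by
    rcases hβ.lt_or_gt with hneg | hpos
    · have h1 : Real.exp (β * b) ≤ Real.exp (β * a) :=
        Real.exp_le_exp.mpr (by nlinarith)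
      rw [hc_def, hd_def, min_eq_right h1, max_eq_left h1, abs_of_neg hneg,
        ← Real.exp_add]
      congr 1
      ring
    · have h1 : Real.exp (β * a) ≤ Real.exp (β * b) :=
        Real.exp_le_exp.mpr (by nlinarith)
      rw [hc_def, hd_def, min_eq_left h1, max_eq_right h1, abs_of_pos hpos,
        ← Real.exp_add]
      congr 1
      ring
  have hErm : ERM β a b μ - ERM β a b ν = (1 / β) * (Real.log X - Real.log Y) := by
    rw [ERM, ERM, ← hX_def, ← hY_def]
    ring
  rw [hErm, abs_mul, abs_div, abs_one]
  calc 1 / |β| * |Real.log X - Real.log Y|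
      ≤ 1 / |β| * (|X - Y| / c) := by
        apply mul_le_mul_of_nonneg_left hlog (by positivity)
    _ ≤ 1 / |β| * ((D * (d - c)) / c) := by
        apply mul_le_mul_of_nonneg_left _ (by positivity)
        gcongr
    _ = ((Real.exp (|β| * (b - a)) - 1) / |β|) * D := by
        rw [hdc]
        field_simp
end

section
/- Let a ≤ b be real numbers and let β ≠ 0. For a Borel probability measure μ supported on [a,b], define the entropic risk measure U_β(μ) = (1/β) · log( ∫_{[a,b]} exp(βx) dμ(x) ). Then for all Borel probability measures μ, ν supported on [a,b] with CDFs F_μ, F_ν: |U_β(μ) − U_β(ν)| ≤ exp(|β|(b − a)) · ∫_ℝ |F_μ(t) − F_ν(t)| dt. -/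
open MeasureTheory

/-- Lipschitz bound for `log` away from zero. -/
lemma log_lip {m x y : ℝ} (hm : 0 < m) (hx : m ≤ x) (hy : m ≤ y) :
    |Real.log x - Real.log y| ≤ |x - y| / m := by
  have key : ∀ u v : ℝ, m ≤ u → m ≤ v → v ≤ u →
      Real.log u - Real.log v ≤ (u - v) / m := by
    intro u v hu hv huv
    have hv0 : 0 < v := lt_of_lt_of_le hm hv
    have hu0 : 0 < u := lt_of_lt_of_le hm hu
    have h1 : Real.log u - Real.log v = Real.log (u / v) :=
      (Real.log_div (ne_of_gt hu0) (ne_of_gt hv0)).symm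
    have h2 : Real.log (u / v) ≤ u / v - 1 :=
      Real.log_le_sub_one_of_pos (div_pos hu0 hv0)
    have h3 : u / v - 1 = (u - v) / v := by field_simp
    have h4 : (u - v) / v ≤ (u - v) / m :=
      div_le_div_of_nonneg_left (by linarith) hm hv
    linarith
  rcases le_total y x with h | h
  · have h1 := key x y hx hy h
    have h2 : Real.log y ≤ Real.log x :=
      (Real.log_le_log_iff (lt_of_lt_of_le hm hy) (lt_of_lt_of_le hm hx)).mpr h
    rw [abs_of_nonneg (by linarith), abs_of_nonneg (by linarith)]
    exact h1
  · have h1 := key y x hy hx h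
    have h2 : Real.log x ≤ Real.log y :=
      (Real.log_le_log_iff (lt_of_lt_of_le hm hx) (lt_of_lt_of_le hm hy)).mpr h
    rw [abs_of_nonpos (by linarith), abs_of_nonpos (by linarith)]
    have h3 : -(x - y) / m = (y - x) / m := by ring
    linarith

/-- Representation of `∫ exp (βx) dμ` through the CDF of `μ`. -/
lemma exp_rep (β a b : ℝ) (hab : a ≤ b) (μ : Measure ℝ) [IsProbabilityMeasure μ]
    (hμ : μ (Set.Icc a b) = 1) :
    ∫ x in Set.Icc a b, Real.exp (β * x) ∂μ
      = Real.exp (β * a)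
        + ∫ t in Set.Ico a b, β * Real.exp (β * t) * (1 - (μ (Set.Iic t)).toReal) := by
  set M : ℝ := Real.exp (max (β * a) (β * b)) with hM
  have hexp_bound : ∀ t, a ≤ t → t ≤ b → Real.exp (β * t) ≤ M := by
    intro t h1 h2
    apply Real.exp_le_exp.mpr
    rcases le_total 0 β with hb | hb
    · exact le_max_of_le_right (by nlinarith)
    · exact le_max_of_le_left (by nlinarith)
  set F : ℝ × ℝ → ℝ :=
    fun p => if a ≤ p.2 ∧ p.2 < p.1 ∧ p.1 ≤ b then β * Real.exp (β * p.2) else 0 with hF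
  have hcompl : μ ((Set.Icc a b)ᶜ) = 0 := by
    rw [measure_compl measurableSet_Icc (measure_ne_top μ _), hμ, measure_univ, tsub_self]
  -- FTC step
  have ftc : ∀ x, a ≤ x →
      (∫ t in Set.Ico a x, β * Real.exp (β * t)) = Real.exp (β * x) - Real.exp (β * a) := by
    intro x hx
    rw [integral_Ico_eq_integral_Ioo, ← integral_Ioc_eq_integral_Ioo,
      ← intervalIntegral.integral_of_le hx]
    have hderiv : ∀ u ∈ Set.uIcc a x,
        HasDerivAt (fun s => Real.exp (β * s)) (β * Real.exp (β * u)) u := by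
      intro u _
      have h := ((hasDerivAt_id u).const_mul β).exp
      convert h using 1 <;> simp only [id] <;> ring
    exact intervalIntegral.integral_eq_sub_of_hasDerivAt hderiv
      ((continuous_const.mul (Real.continuous_exp.comp (continuous_const.mul
        continuous_id))).intervalIntegrable a x)
  -- inner integral in t
  have inner_t : ∀ x ∈ Set.Icc a b,
      (∫ t in Set.Ico a b, F (x, t)) = Real.exp (β * x) - Real.exp (β * a) := by
    rintro x ⟨hax, hxb⟩
    have heq : (fun t => F (x, t))
        = (Set.Ico a x).indicator (fun t => β * Real.exp (β * t)) := by
      funext t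
      simp only [hF, Set.indicator, Set.mem_Ico]
      by_cases h : a ≤ t ∧ t < x
      · rw [if_pos ⟨h.1, h.2, hxb⟩, if_pos h]
      · rw [if_neg (by tauto), if_neg h]
    rw [heq, setIntegral_indicator measurableSet_Ico]
    have hset : Set.Ico a b ∩ Set.Ico a x = Set.Ico a x := by
      apply Set.inter_eq_right.mpr
      intro t ⟨h1, h2⟩
      exact ⟨h1, lt_of_lt_of_le h2 hxb⟩
    rw [hset, ftc x hax]
  -- inner integral in x
  have inner_x : ∀ t ∈ Set.Ico a b,
      (∫ x in Set.Icc a b, F (x, t) ∂μ)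
        = β * Real.exp (β * t) * (1 - (μ (Set.Iic t)).toReal) := by
    rintro t ⟨hat, htb⟩
    have heq : (fun x => F (x, t))
        = (Set.Ioc t b).indicator (fun _ => β * Real.exp (β * t)) := by
      funext x
      simp only [hF, Set.indicator, Set.mem_Ioc]
      by_cases h : t < x ∧ x ≤ b
      · rw [if_pos ⟨hat, h.1, h.2⟩, if_pos h]
      · rw [if_neg (by tauto), if_neg h]
    rw [heq, setIntegral_indicator measurableSet_Ioc]
    have hset : Set.Icc a b ∩ Set.Ioc t b = Set.Ioc t b := by
      apply Set.inter_eq_right.mpr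
      intro x ⟨h1, h2⟩
      exact ⟨le_of_lt (lt_of_le_of_lt hat h1), h2⟩
    have hIoc : μ (Set.Ioc t b) = μ (Set.Ioi t) := by
      apply le_antisymm (measure_mono Set.Ioc_subset_Ioi_self)
      calc μ (Set.Ioi t) ≤ μ (Set.Ioc t b ∪ (Set.Icc a b)ᶜ) := by
            apply measure_mono
            intro x hx
            rcases le_or_gt x b with h | h
            · exact Or.inl ⟨hx, h⟩
            · exact Or.inr (fun hc => absurd hc.2 (not_le.mpr h))
        _ ≤ μ (Set.Ioc t b) + μ ((Set.Icc a b)ᶜ) := measure_union_le _ _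
        _ = μ (Set.Ioc t b) := by rw [hcompl, add_zero]
    have hIoi : μ (Set.Ioi t) = 1 - μ (Set.Iic t) := by
      rw [← Set.compl_Iic, measure_compl measurableSet_Iic (measure_ne_top μ _), measure_univ]
    rw [hset, setIntegral_const, measureReal_def, hIoc, hIoi,
      ENNReal.toReal_sub_of_le prob_le_one ENNReal.one_ne_top, ENNReal.toReal_one,
      smul_eq_mul, mul_comm]
  -- integrability of exp on Icc
  have hint_exp : IntegrableOn (fun x => Real.exp (β * x)) (Set.Icc a b) μ :=
    ContinuousOn.integrableOn_compact isCompact_Icc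
      ((Real.continuous_exp.comp (continuous_const.mul continuous_id)).continuousOn)
  -- finite measure instance for the restricted volume
  haveI hfin : IsFiniteMeasure (volume.restrict (Set.Ico a b)) := by
    constructor
    rw [Measure.restrict_apply_univ, Real.volume_Ico]
    exact ENNReal.ofReal_lt_top
  -- Fubini
  have hFmeas : Measurable F := by
    have hS : MeasurableSet {p : ℝ × ℝ | a ≤ p.2 ∧ p.2 < p.1 ∧ p.1 ≤ b} := by
      apply (measurableSet_le measurable_const measurable_snd).inter
      exact (measurableSet_lt measurable_snd measurable_fst).inter
        (measurableSet_le measurable_fst measurable_const)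
    exact Measurable.ite hS ((measurable_const.mul
      ((Real.measurable_exp.comp (measurable_const.mul measurable_snd))))) measurable_const
  have hFint : Integrable (Function.uncurry (fun x t => F (x, t)))
      ((μ.restrict (Set.Icc a b)).prod (volume.restrict (Set.Ico a b))) := by
    apply Integrable.mono' (integrable_const (|β| * M)) hFmeas.aestronglyMeasurable
    apply ae_of_all
    intro p
    simp only [hF, Real.norm_eq_abs]
    by_cases h : a ≤ p.2 ∧ p.2 < p.1 ∧ p.1 ≤ b
    · rw [if_pos h, abs_mul, abs_of_pos (Real.exp_pos _)]
      exact mul_le_mul_of_nonneg_left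
        (hexp_bound p.2 h.1 (le_of_lt (lt_of_lt_of_le h.2.1 h.2.2))) (abs_nonneg β)
    · rw [if_neg h, abs_zero]
      exact mul_nonneg (abs_nonneg β) (le_of_lt (Real.exp_pos _))
  have hswap : (∫ x in Set.Icc a b, (∫ t in Set.Ico a b, F (x, t)) ∂μ)
      = ∫ t in Set.Ico a b, (∫ x in Set.Icc a b, F (x, t) ∂μ) :=
    integral_integral_swap hFint
  -- put everything together
  have hD : (∫ x in Set.Icc a b, (Real.exp (β * x) - Real.exp (β * a)) ∂μ)
      = ∫ t in Set.Ico a b, β * Real.exp (β * t) * (1 - (μ (Set.Iic t)).toReal) := by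
    rw [show (∫ x in Set.Icc a b, (Real.exp (β * x) - Real.exp (β * a)) ∂μ)
        = ∫ x in Set.Icc a b, (∫ t in Set.Ico a b, F (x, t)) ∂μ from
      setIntegral_congr_fun measurableSet_Icc (fun x hx => (inner_t x hx).symm), hswap]
    exact setIntegral_congr_fun measurableSet_Ico (fun t ht => inner_x t ht)
  have hsub : (∫ x in Set.Icc a b, (Real.exp (β * x) - Real.exp (β * a)) ∂μ)
      = (∫ x in Set.Icc a b, Real.exp (β * x) ∂μ) - Real.exp (β * a) := by
    rw [integral_sub hint_exp (integrable_const _), setIntegral_const]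
    simp [hμ, measureReal_def]
  linarith [hD, hsub]

/-- Lipschitz continuity of the entropic risk measure with respect to the ℓ1 distance
of CDFs, with Lipschitz constant `exp (|β| (b - a))`. -/
theorem erm_lipschitz_l1
    (a b : ℝ) (hab : a ≤ b) (β : ℝ) (hβ : β ≠ 0)
    (μ ν : Measure ℝ) [IsProbabilityMeasure μ] [IsProbabilityMeasure ν]
    (hμ : μ (Set.Icc a b) = 1) (hν : ν (Set.Icc a b) = 1) :
    |ERM β a b μ - ERM β a b ν| ≤
      Real.exp (|β| * (b - a)) *
        ∫ t : ℝ, |(μ (Set.Iic t)).toReal - (ν (Set.Iic t)).toReal| := by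
  set m : ℝ := Real.exp (min (β * a) (β * b)) with hmdef
  set M : ℝ := Real.exp (max (β * a) (β * b)) with hMdef
  have hm0 : 0 < m := Real.exp_pos _
  have hβ0 : (0:ℝ) < |β| := abs_pos.mpr hβ
  -- complements are null
  have hcomplμ : μ ((Set.Icc a b)ᶜ) = 0 := by
    rw [measure_compl measurableSet_Icc (measure_ne_top μ _), hμ, measure_univ, tsub_self]
  have hcomplν : ν ((Set.Icc a b)ᶜ) = 0 := by
    rw [measure_compl measurableSet_Icc (measure_ne_top ν _), hν, measure_univ, tsub_self]
  -- CDF values outside [a, b)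
  have hμ0 : ∀ t, t < a → μ (Set.Iic t) = 0 := by
    intro t ht
    refine measure_mono_null ?_ hcomplμ
    intro x hx hc
    exact absurd (hc.1.trans hx) (not_le.mpr ht)
  have hν0 : ∀ t, t < a → ν (Set.Iic t) = 0 := by
    intro t ht
    refine measure_mono_null ?_ hcomplν
    intro x hx hc
    exact absurd (hc.1.trans hx) (not_le.mpr ht)
  have hμ1 : ∀ t, b ≤ t → μ (Set.Iic t) = 1 := by
    intro t ht
    refine le_antisymm prob_le_one ?_
    rw [← hμ]
    exact measure_mono (fun x hx => hx.2.trans ht)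
  have hν1 : ∀ t, b ≤ t → ν (Set.Iic t) = 1 := by
    intro t ht
    refine le_antisymm prob_le_one ?_
    rw [← hν]
    exact measure_mono (fun x hx => hx.2.trans ht)
  -- the ℓ1 distance localizes to [a, b)
  have hJeq : (∫ t : ℝ, |(μ (Set.Iic t)).toReal - (ν (Set.Iic t)).toReal|)
      = ∫ t in Set.Ico a b, |(μ (Set.Iic t)).toReal - (ν (Set.Iic t)).toReal| := by
    symm
    apply setIntegral_eq_integral_of_forall_compl_eq_zero
    intro t ht
    rcases lt_or_ge t a with h | h
    · rw [hμ0 t h, hν0 t h]; simp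
    · have hb : b ≤ t := by
        by_contra hbt
        push_neg at hbt
        exact ht ⟨h, hbt⟩
      rw [hμ1 t hb, hν1 t hb]; simp
  rw [hJeq]
  -- measurability of the CDFs
  have hFμmeas : Measurable (fun t => (μ (Set.Iic t)).toReal) :=
    Monotone.measurable (fun s t hst =>
      ENNReal.toReal_mono (measure_ne_top μ _) (measure_mono (Set.Iic_subset_Iic.mpr hst)))
  have hFνmeas : Measurable (fun t => (ν (Set.Iic t)).toReal) :=
    Monotone.measurable (fun s t hst =>
      ENNReal.toReal_mono (measure_ne_top ν _) (measure_mono (Set.Iic_subset_Iic.mpr hst)))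
  have hFμ01 : ∀ t, (μ (Set.Iic t)).toReal ≤ 1 := fun t => by
    rw [← ENNReal.toReal_one]
    exact ENNReal.toReal_mono ENNReal.one_ne_top prob_le_one
  have hFν01 : ∀ t, (ν (Set.Iic t)).toReal ≤ 1 := fun t => by
    rw [← ENNReal.toReal_one]
    exact ENNReal.toReal_mono ENNReal.one_ne_top prob_le_one
  -- generic integrability of bounded measurable functions on Ico a b
  haveI hfin : IsFiniteMeasure (volume.restrict (Set.Ico a b)) := by
    constructor
    rw [Measure.restrict_apply_univ, Real.volume_Ico]
    exact ENNReal.ofReal_lt_top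
  have hbddint : ∀ (f : ℝ → ℝ) (C : ℝ), Measurable f →
      (∀ t ∈ Set.Ico a b, |f t| ≤ C) → IntegrableOn f (Set.Ico a b) volume := by
    intro f C hmeas hbd
    apply Integrable.mono' (integrable_const C) hmeas.aestronglyMeasurable
    filter_upwards [ae_restrict_mem measurableSet_Ico] with t ht
    rw [Real.norm_eq_abs]
    exact hbd t ht
  -- pointwise bound on the exponential weight
  have hexpb : ∀ t, a ≤ t → t ≤ b → |β * Real.exp (β * t)| ≤ |β| * M := by
    intro t h1 h2
    rw [abs_mul, abs_of_pos (Real.exp_pos _)]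
    refine mul_le_mul_of_nonneg_left ?_ (abs_nonneg β)
    apply Real.exp_le_exp.mpr
    rcases le_total 0 β with hb | hb
    · exact le_max_of_le_right (by nlinarith)
    · exact le_max_of_le_left (by nlinarith)
  have hmexp : ∀ x, a ≤ x → x ≤ b → m ≤ Real.exp (β * x) := by
    intro x h1 h2
    apply Real.exp_le_exp.mpr
    rcases le_total 0 β with hb | hb
    · exact (min_le_left _ _).trans (by nlinarith)
    · exact (min_le_right _ _).trans (by nlinarith)
  -- the integrands are integrable
  have hmeasμ : Measurable (fun t => β * Real.exp (β * t) * (1 - (μ (Set.Iic t)).toReal)) :=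
    (measurable_const.mul (Real.measurable_exp.comp (measurable_const.mul measurable_id))).mul
      (measurable_const.sub hFμmeas)
  have hmeasν : Measurable (fun t => β * Real.exp (β * t) * (1 - (ν (Set.Iic t)).toReal)) :=
    (measurable_const.mul (Real.measurable_exp.comp (measurable_const.mul measurable_id))).mul
      (measurable_const.sub hFνmeas)
  have hbdμ : ∀ t ∈ Set.Ico a b,
      |β * Real.exp (β * t) * (1 - (μ (Set.Iic t)).toReal)| ≤ |β| * M * 2 := by
    rintro t ⟨h1, h2⟩
    rw [abs_mul]
    refine mul_le_mul (hexpb t h1 h2.le) ?_ (abs_nonneg _)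
      (mul_nonneg (abs_nonneg _) (le_of_lt (Real.exp_pos _)))
    rw [abs_le]
    constructor <;> [skip; skip] <;>
      · have := hFμ01 t; have := ENNReal.toReal_nonneg (a := μ (Set.Iic t)); linarith
  have hbdν : ∀ t ∈ Set.Ico a b,
      |β * Real.exp (β * t) * (1 - (ν (Set.Iic t)).toReal)| ≤ |β| * M * 2 := by
    rintro t ⟨h1, h2⟩
    rw [abs_mul]
    refine mul_le_mul (hexpb t h1 h2.le) ?_ (abs_nonneg _)
      (mul_nonneg (abs_nonneg _) (le_of_lt (Real.exp_pos _)))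
    rw [abs_le]
    constructor <;> [skip; skip] <;>
      · have := hFν01 t; have := ENNReal.toReal_nonneg (a := ν (Set.Iic t)); linarith
  have hAμ : IntegrableOn (fun t => β * Real.exp (β * t) * (1 - (μ (Set.Iic t)).toReal))
      (Set.Ico a b) volume := hbddint _ (|β| * M * 2) hmeasμ hbdμ
  have hAν : IntegrableOn (fun t => β * Real.exp (β * t) * (1 - (ν (Set.Iic t)).toReal))
      (Set.Ico a b) volume := hbddint _ (|β| * M * 2) hmeasν hbdν
  have hJint : IntegrableOn (fun t => |(μ (Set.Iic t)).toReal - (ν (Set.Iic t)).toReal|)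
      (Set.Ico a b) volume := by
    refine hbddint _ 2 (hFμmeas.sub hFνmeas).abs ?_
    intro t _
    rw [abs_abs, abs_le]
    constructor <;>
      · have := hFμ01 t; have := hFν01 t
        have := ENNReal.toReal_nonneg (a := μ (Set.Iic t))
        have := ENNReal.toReal_nonneg (a := ν (Set.Iic t))
        linarith
  have hgint : IntegrableOn (fun t => β * Real.exp (β * t) *
      ((ν (Set.Iic t)).toReal - (μ (Set.Iic t)).toReal)) (Set.Ico a b) volume := by
    refine hbddint _ (|β| * M * 2)
      ((measurable_const.mul (Real.measurable_exp.comp (measurable_const.mul measurable_id))).mul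
        (hFνmeas.sub hFμmeas)) ?_
    rintro t ⟨h1, h2⟩
    rw [abs_mul]
    refine mul_le_mul (hexpb t h1 h2.le) ?_ (abs_nonneg _)
      (mul_nonneg (abs_nonneg _) (le_of_lt (Real.exp_pos _)))
    rw [abs_le]
    constructor <;>
      · have := hFμ01 t; have := hFν01 t
        have := ENNReal.toReal_nonneg (a := μ (Set.Iic t))
        have := ENNReal.toReal_nonneg (a := ν (Set.Iic t))
        linarith
  -- difference of the exponential integrals via the representation lemma
  have hdiff : (∫ x in Set.Icc a b, Real.exp (β * x) ∂μ)
        - (∫ x in Set.Icc a b, Real.exp (β * x) ∂ν)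
      = ∫ t in Set.Ico a b, β * Real.exp (β * t) *
          ((ν (Set.Iic t)).toReal - (μ (Set.Iic t)).toReal) := by
    rw [exp_rep β a b hab μ hμ, exp_rep β a b hab ν hν]
    have h1 : (Real.exp (β * a)
          + ∫ t in Set.Ico a b, β * Real.exp (β * t) * (1 - (μ (Set.Iic t)).toReal))
        - (Real.exp (β * a)
          + ∫ t in Set.Ico a b, β * Real.exp (β * t) * (1 - (ν (Set.Iic t)).toReal))
        = (∫ t in Set.Ico a b, β * Real.exp (β * t) * (1 - (μ (Set.Iic t)).toReal))
          - ∫ t in Set.Ico a b, β * Real.exp (β * t) * (1 - (ν (Set.Iic t)).toReal) := by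
      ring
    rw [h1, ← integral_sub hAμ hAν]
    exact setIntegral_congr_fun measurableSet_Ico (fun t _ => by ring)
  -- the key estimate on the difference of exponential integrals
  have habs : |(∫ x in Set.Icc a b, Real.exp (β * x) ∂μ)
        - ∫ x in Set.Icc a b, Real.exp (β * x) ∂ν|
      ≤ |β| * M * ∫ t in Set.Ico a b, |(μ (Set.Iic t)).toReal - (ν (Set.Iic t)).toReal| := by
    rw [hdiff]
    calc |∫ t in Set.Ico a b, β * Real.exp (β * t) *
            ((ν (Set.Iic t)).toReal - (μ (Set.Iic t)).toReal)|
        ≤ ∫ t in Set.Ico a b, |β * Real.exp (β * t) *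
            ((ν (Set.Iic t)).toReal - (μ (Set.Iic t)).toReal)| := by
          simpa only [Real.norm_eq_abs] using norm_integral_le_integral_norm
            (μ := volume.restrict (Set.Ico a b)) (fun t => β * Real.exp (β * t) *
              ((ν (Set.Iic t)).toReal - (μ (Set.Iic t)).toReal))
      _ ≤ ∫ t in Set.Ico a b,
            |β| * M * |(μ (Set.Iic t)).toReal - (ν (Set.Iic t)).toReal| := by
          refine setIntegral_mono_on hgint.abs (hJint.const_mul _) measurableSet_Ico ?_
          rintro t ⟨h1, h2⟩
          rw [abs_mul, abs_sub_comm]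
          exact mul_le_mul_of_nonneg_right (hexpb t h1 h2.le) (abs_nonneg _)
      _ = |β| * M * ∫ t in Set.Ico a b,
            |(μ (Set.Iic t)).toReal - (ν (Set.Iic t)).toReal| := integral_const_mul _ _
  -- lower bounds for the exponential integrals
  have hint_expμ : IntegrableOn (fun x => Real.exp (β * x)) (Set.Icc a b) μ :=
    ContinuousOn.integrableOn_compact isCompact_Icc
      ((Real.continuous_exp.comp (continuous_const.mul continuous_id)).continuousOn)
  have hint_expν : IntegrableOn (fun x => Real.exp (β * x)) (Set.Icc a b) ν :=
    ContinuousOn.integrableOn_compact isCompact_Icc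
      ((Real.continuous_exp.comp (continuous_const.mul continuous_id)).continuousOn)
  have hmIμ : m ≤ ∫ x in Set.Icc a b, Real.exp (β * x) ∂μ := by
    have h0 : (∫ x in Set.Icc a b, m ∂μ) ≤ ∫ x in Set.Icc a b, Real.exp (β * x) ∂μ :=
      setIntegral_mono_on (integrable_const m) hint_expμ measurableSet_Icc
        (fun x hx => hmexp x hx.1 hx.2)
    rw [setIntegral_const, measureReal_def, hμ] at h0
    simpa using h0
  have hmIν : m ≤ ∫ x in Set.Icc a b, Real.exp (β * x) ∂ν := by
    have h0 : (∫ x in Set.Icc a b, m ∂ν) ≤ ∫ x in Set.Icc a b, Real.exp (β * x) ∂ν :=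
      setIntegral_mono_on (integrable_const m) hint_expν measurableSet_Icc
        (fun x hx => hmexp x hx.1 hx.2)
    rw [setIntegral_const, measureReal_def, hν] at h0
    simpa using h0
  have hlog := log_lip hm0 hmIμ hmIν
  have hJnn : 0 ≤ ∫ t in Set.Ico a b, |(μ (Set.Iic t)).toReal - (ν (Set.Iic t)).toReal| :=
    integral_nonneg fun t => abs_nonneg _
  have hMm : M / m = Real.exp (|β| * (b - a)) := by
    rw [← Real.exp_sub]
    congr 1
    rw [max_sub_min_eq_abs, show β * b - β * a = β * (b - a) by ring, abs_mul,
      abs_of_nonneg (sub_nonneg.mpr hab)]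
  have hE : ERM β a b μ - ERM β a b ν
      = (1 / β) * (Real.log (∫ x in Set.Icc a b, Real.exp (β * x) ∂μ)
        - Real.log (∫ x in Set.Icc a b, Real.exp (β * x) ∂ν)) := by
    unfold ERM; ring
  calc |ERM β a b μ - ERM β a b ν|
      = (1 / |β|) * |Real.log (∫ x in Set.Icc a b, Real.exp (β * x) ∂μ)
        - Real.log (∫ x in Set.Icc a b, Real.exp (β * x) ∂ν)| := by
        rw [hE, abs_mul, abs_div, abs_one]
    _ ≤ (1 / |β|) * (|(∫ x in Set.Icc a b, Real.exp (β * x) ∂μ)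
        - ∫ x in Set.Icc a b, Real.exp (β * x) ∂ν| / m) := by
        refine mul_le_mul_of_nonneg_left hlog (by positivity)
    _ ≤ (1 / |β|) * ((|β| * M *
          ∫ t in Set.Ico a b, |(μ (Set.Iic t)).toReal - (ν (Set.Iic t)).toReal|) / m) := by
        refine mul_le_mul_of_nonneg_left ?_ (by positivity)
        exact div_le_div_of_nonneg_right habs hm0.le
    _ = Real.exp (|β| * (b - a)) *
          ∫ t in Set.Ico a b, |(μ (Set.Iic t)).toReal - (ν (Set.Iic t)).toReal| := by
        rw [← hMm]
        field_simp
end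

section
/- Let n ≥ 2, let P ∈ ℝ^n be a probability vector, and let c > 0 satisfy P_n + c/2 ≤ 1. Let l be the least index i ∈ {1,…,n} with ∑_{j=1}^i P_j ≥ c/2 (which exists and satisfies l ≤ n−1). Define P̃ ∈ ℝ^n by: P̃_i = 0 for i < l; P̃_l = ∑_{j=1}^l P_j − c/2; P̃_i = P_i for l < i ≤ n−1; and P̃_n = P_n + c/2. Then P̃ is a probability vector, and for every probability vector Q ∈ ℝ^n with ∑_{j=1}^n |P_j − Q_j| ≤ c and every i with 1 ≤ i ≤ n, one has ∑_{j=1}^i P̃_j ≤ ∑_{j=1}^i Q_j. -/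
open Finset

/-- Correctness of the optimistic-model construction (subroutine `OM`, Case 1):
given a probability vector `P` (indexed by `1, …, n`) with `P n + c/2 ≤ 1`, letting
`l` be the least index whose prefix sum reaches `c/2`, the vector `P̃` that removes
mass `c/2` from the leftmost entries and adds it to the last entry satisfies
`l ≤ n - 1`, is a probability vector, and its prefix sums are dominated by those of
every probability vector `Q` within ℓ1 distance `c` of `P`. -/
theorem om_optimistic_model
    (n : ℕ) (hn : 2 ≤ n) (P : ℕ → ℝ)
    (hP0 : ∀ j ∈ Finset.Icc 1 n, 0 ≤ P j) (hP1 : ∑ j ∈ Finset.Icc 1 n, P j = 1)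
    (c : ℝ) (hc : 0 < c) (hPn : P n + c / 2 ≤ 1)
    (l : ℕ) (hl_mem : l ∈ Finset.Icc 1 n)
    (hl_ge : c / 2 ≤ ∑ j ∈ Finset.Icc 1 l, P j)
    (hl_min : ∀ i ∈ Finset.Icc 1 n, c / 2 ≤ ∑ j ∈ Finset.Icc 1 i, P j → l ≤ i)
    (Pt : ℕ → ℝ)
    (hPt : ∀ i ∈ Finset.Icc 1 n, Pt i =
      if i < l then 0
      else if i = l then (∑ j ∈ Finset.Icc 1 l, P j) - c / 2
      else if i = n then P n + c / 2
      else P i) :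
    l ≤ n - 1 ∧
    (∀ i ∈ Finset.Icc 1 n, 0 ≤ Pt i) ∧
    (∑ i ∈ Finset.Icc 1 n, Pt i = 1) ∧
    (∀ Q : ℕ → ℝ, (∀ j ∈ Finset.Icc 1 n, 0 ≤ Q j) →
      (∑ j ∈ Finset.Icc 1 n, Q j = 1) →
      (∑ j ∈ Finset.Icc 1 n, |P j - Q j| ≤ c) →
      ∀ i ∈ Finset.Icc 1 n, ∑ j ∈ Finset.Icc 1 i, Pt j ≤ ∑ j ∈ Finset.Icc 1 i, Q j) := by
  obtain ⟨hl1, hln⟩ := Finset.mem_Icc.mp hl_mem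
  have hn1 : 1 ≤ n := le_trans (by norm_num) hn
  -- l ≤ n - 1
  have hln1 : l ≤ n - 1 := by
    by_contra h
    push_neg at h
    have hlt : ∑ j ∈ Icc 1 (n-1), P j < c / 2 := by
      by_contra h2
      push_neg at h2
      have := hl_min (n-1) (by simp [Finset.mem_Icc]; omega) h2
      omega
    have hsplit : ∑ j ∈ Icc 1 (n-1), P j + P n = 1 := by
      have hrw : ∑ j ∈ Icc 1 n, P j = ∑ j ∈ Icc 1 (n-1), P j + P (n-1+1) := by
        rw [show n = (n-1)+1 by omega] ; exact Finset.sum_Icc_succ_top (by omega) P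
      rw [show n - 1 + 1 = n by omega] at hrw
      linarith [hP1, hrw]
    linarith
  -- prefix sum formula for Pt
  have key : ∀ i, 1 ≤ i → i ≤ n →
      ∑ j ∈ Icc 1 i, Pt j =
        if i < l then 0 else if i = n then 1 else (∑ j ∈ Icc 1 i, P j) - c / 2 := by
    intro i hi
    induction i, hi using Nat.le_induction with
    | base =>
      intro hin
      rw [Finset.Icc_self, Finset.sum_singleton, Finset.sum_singleton,
        hPt 1 (by simp [Finset.mem_Icc]; omega)]
      by_cases h1 : 1 < l
      · simp [h1]
      · have hl1' : l = 1 := by omega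
        have h1n : (1:ℕ) ≠ n := by omega
        simp [hl1', h1n, Finset.Icc_self]
    | succ i hi ih =>
      intro hin
      have hin' : i ≤ n := by omega
      rw [Finset.sum_Icc_succ_top (by omega : 1 ≤ i + 1) Pt, ih hin',
        hPt (i+1) (by simp [Finset.mem_Icc]; omega)]
      by_cases h1 : i + 1 < l
      · have h1' : i < l := by omega
        simp [h1, h1']
      · by_cases h2 : i + 1 = l
        · subst h2
          have h3 : i + 1 ≠ n := by omega
          simp [h3]
        · by_cases h3 : i + 1 = n
          · have hli : l ≤ i := by omega
            have hil : ¬ (i < l) := by omega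
            have hine : i ≠ n := by omega
            have hi1l : ¬ (i + 1 < l) := by omega
            have hS : ∑ j ∈ Icc 1 i, P j + P n = 1 := by
              have hrw := Finset.sum_Icc_succ_top (by omega : 1 ≤ i + 1) P
              rw [h3] at hrw
              linarith [hP1, hrw]
            have hnl2 : ¬ (n < l) := by omega
            have hne2 : ¬ (n = l) := by omega
            simp only [h3, hil, hi1l, hine, hnl2, hne2, if_false, if_true]
            linarith
          · have hil : ¬ (i < l) := by omega
            have hine : i ≠ n := by omega
            have hi1l : ¬ (i + 1 < l) := by omega
            rw [Finset.sum_Icc_succ_top (by omega : 1 ≤ i + 1) P]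
            simp only [hil, hi1l, hine, h2, h3, if_false]
            ring
  refine ⟨hln1, ?_, ?_, ?_⟩
  · -- nonnegativity
    intro i hi
    obtain ⟨hi1, hin⟩ := Finset.mem_Icc.mp hi
    rw [hPt i hi]
    split_ifs with a b d
    · exact le_rfl
    · linarith
    · have := hP0 n (by simp [Finset.mem_Icc]; omega)
      linarith
    · exact hP0 i hi
  · -- sums to 1
    have := key n hn1 le_rfl
    have hnl : ¬ (n < l) := by omega
    simp [hnl] at this
    exact this
  · -- domination
    intro Q hQ0 hQ1 hl1dist i hi
    obtain ⟨hi1, hin⟩ := Finset.mem_Icc.mp hi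
    rw [key i hi1 hin]
    have consec : ∀ f : ℕ → ℝ,
        ∑ j ∈ Icc 1 i, f j + ∑ j ∈ Icc (i+1) n, f j = ∑ j ∈ Icc 1 n, f j := by
      intro f
      have := Finset.sum_Ioc_consecutive f (Nat.zero_le i) hin
      simpa [← Finset.Icc_add_one_left_eq_Ioc] using this
    split_ifs with h h'
    · exact Finset.sum_nonneg fun j hj => hQ0 j
        (Finset.mem_Icc.mpr ⟨(Finset.mem_Icc.mp hj).1, le_trans (Finset.mem_Icc.mp hj).2 hin⟩)
    · subst h'
      rw [hQ1]
    · -- S i - c/2 ≤ prefix Q i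
      have e1 : ∑ j ∈ Icc 1 i, (P j - Q j) ≤ ∑ j ∈ Icc 1 i, |P j - Q j| :=
        Finset.sum_le_sum fun j _ => le_abs_self _
      have e2 : ∑ j ∈ Icc (i+1) n, (Q j - P j) ≤ ∑ j ∈ Icc (i+1) n, |P j - Q j| :=
        Finset.sum_le_sum fun j _ => by rw [abs_sub_comm]; exact le_abs_self _
      have e3 := consec (fun j => |P j - Q j|)
      have hAP := consec P
      have hAQ := consec Q
      have d1 : ∑ j ∈ Icc 1 i, (P j - Q j)
          = ∑ j ∈ Icc 1 i, P j - ∑ j ∈ Icc 1 i, Q j := Finset.sum_sub_distrib _ _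
      have d2 : ∑ j ∈ Icc (i+1) n, (Q j - P j)
          = ∑ j ∈ Icc (i+1) n, Q j - ∑ j ∈ Icc (i+1) n, P j := Finset.sum_sub_distrib _ _
      rw [hP1] at hAP
      rw [hQ1] at hAQ
      linarith
end

section
/- Let X be a finite set with |X| = m, let K ≥ 1, and let z_1, …, z_K be a sequence of elements of X. For each k ∈ {1,…,K} let N_k = |{ j < k : z_j = z_k }| be the number of earlier occurrences of z_k. Then ∑_{k=1}^K 1/√(max(N_k, 1)) ≤ m + 2√(m·K). -/
open Finset

/-- Rearrangement: summing a function of the rank over a finset of naturals. -/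
lemma aux_rank_sum (f : ℕ → ℝ) :
    ∀ n (s : Finset ℕ), s.card = n →
      ∑ k ∈ s, f ((s.filter fun j => j < k).card) = ∑ i ∈ range n, f i := by
  intro n
  induction n with
  | zero => intro s hs; simp [Finset.card_eq_zero.mp hs]
  | succ n ih =>
    intro s hs
    have hne : s.Nonempty := Finset.card_pos.mp (by omega)
    set M := s.max' hne with hM
    have hMs : M ∈ s := s.max'_mem hne
    have hs' : (s.erase M).card = n := by
      rw [Finset.card_erase_of_mem hMs, hs]
      omega

    have key1 : (s.filter fun j => j < M) = s.erase M := by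
      ext a
      simp only [Finset.mem_filter, Finset.mem_erase]
      constructor
      · rintro ⟨ha, hlt⟩; exact ⟨by omega, ha⟩
      · rintro ⟨hne', ha⟩
        exact ⟨ha, lt_of_le_of_ne (s.le_max' a ha) hne'⟩
    have key2 : ∀ k ∈ s.erase M,
        (s.filter fun j => j < k) = ((s.erase M).filter fun j => j < k) := by
      intro k hk
      have hkM : k < M := by
        rcases Finset.mem_erase.mp hk with ⟨hne', hks⟩
        exact lt_of_le_of_ne (s.le_max' k hks) hne'
      ext a
      simp only [Finset.mem_filter, Finset.mem_erase]
      constructor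
      · rintro ⟨ha, hlt⟩; exact ⟨⟨by omega, ha⟩, hlt⟩
      · rintro ⟨⟨_, ha⟩, hlt⟩; exact ⟨ha, hlt⟩
    rw [← Finset.add_sum_erase _ _ hMs, key1, hs',
      Finset.sum_congr rfl (fun k hk => by rw [key2 k hk]), ih _ hs',
      Finset.sum_range_succ]
    ring

lemma aux_sum_inv_sqrt (n : ℕ) :
    ∑ i ∈ range n, 1 / Real.sqrt ((i : ℝ) + 1) ≤ 2 * Real.sqrt n := by
  induction n with
  | zero => simp
  | succ n ih =>
    rw [Finset.sum_range_succ]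
    have h1 : Real.sqrt n ≤ Real.sqrt (n + 1) :=
      Real.sqrt_le_sqrt (by push_cast; linarith)
    have h2 : (0:ℝ) < Real.sqrt ((n:ℝ) + 1) :=
      Real.sqrt_pos.mpr (by positivity)
    have h3 : Real.sqrt ((n:ℝ)+1) * Real.sqrt ((n:ℝ)+1) = (n:ℝ)+1 :=
      Real.mul_self_sqrt (by positivity)
    have h4 : Real.sqrt (n:ℝ) * Real.sqrt (n:ℝ) = (n:ℝ) :=
      Real.mul_self_sqrt (by positivity)
    have key : 1 / Real.sqrt ((n:ℝ) + 1) ≤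
        2 * Real.sqrt ((n:ℝ)+1) - 2 * Real.sqrt (n:ℝ) := by
      rw [div_le_iff₀ h2]
      nlinarith [Real.sqrt_nonneg (n:ℝ), Real.sqrt_nonneg ((n:ℝ)+1)]
    push_cast
    push_cast at ih
    linarith

/-- Pigeonhole bound: for a sequence `z_1, …, z_K` in a finite set of size `m`, letting
`N_k` be the number of earlier occurrences of `z_k`, one has
`∑_{k=1}^K 1 / √(max N_k 1) ≤ m + 2 √(m K)`. -/
theorem pigeonhole_sqrt_count_sum
    (X : Type*) [Fintype X] [DecidableEq X] (m : ℕ) (hm : Fintype.card X = m)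
    (K : ℕ) (hK : 1 ≤ K) (z : ℕ → X) :
    ∑ k ∈ Finset.range K,
        1 / Real.sqrt (max (((Finset.range k).filter fun j => z j = z k).card : ℝ) 1) ≤
      (m : ℝ) + 2 * Real.sqrt ((m : ℝ) * K) := by
  classical
  set g : ℕ → ℝ := fun i => 1 / Real.sqrt (max (i : ℝ) 1) with hg
  -- group by value
  have hfiber : ∑ k ∈ Finset.range K,
      1 / Real.sqrt (max (((Finset.range k).filter fun j => z j = z k).card : ℝ) 1)
      = ∑ x : X, ∑ k ∈ (range K).filter (fun k => z k = x),
          g (((range K).filter (fun k => z k = x) |>.filter fun j => j < k).card) := by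
    rw [← Finset.sum_fiberwise (range K) (fun k => z k)
      (fun k => 1 / Real.sqrt (max (((Finset.range k).filter fun j => z j = z k).card : ℝ) 1))]
    refine Finset.sum_congr rfl fun x _ => Finset.sum_congr rfl fun k hk => ?_
    rcases Finset.mem_filter.mp hk with ⟨hkK, hzk⟩
    have : ((Finset.range k).filter fun j => z j = z k)
        = ((range K).filter (fun k' => z k' = x) |>.filter fun j => j < k) := by
      ext a
      simp only [Finset.mem_filter, Finset.mem_range] at *
      constructor
      · rintro ⟨hak, hz⟩
        exact ⟨⟨by omega, by rw [hz, hzk]⟩, hak⟩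
      · rintro ⟨⟨_, hz⟩, hak⟩
        exact ⟨hak, by rw [hz, hzk]⟩
    rw [this]
  rw [hfiber]
  -- per-fiber bound
  have hT : ∀ n : ℕ, ∑ i ∈ range n, g i ≤ 1 + 2 * Real.sqrt n := by
    intro n
    cases n with
    | zero => simp [hg]
    | succ n =>
      rw [Finset.sum_range_succ']
      have hg0 : g 0 = 1 := by simp [hg]
      have hgi : ∀ i ∈ range n, g (i + 1) = 1 / Real.sqrt ((i:ℝ) + 1) := by
        intro i _
        simp only [hg]
        congr 1
        congr 1
        rw [max_eq_left]
        · push_cast; ring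
        · push_cast; linarith [Nat.cast_nonneg (α := ℝ) i]
      rw [Finset.sum_congr rfl hgi, hg0]
      have := aux_sum_inv_sqrt n
      have hmono : Real.sqrt (n:ℝ) ≤ Real.sqrt ((n:ℕ).succ :ℝ) := by
        apply Real.sqrt_le_sqrt; push_cast; linarith
      push_cast at hmono ⊢
      linarith
  set cnt : X → ℕ := fun x => ((range K).filter (fun k => z k = x)).card with hcnt
  have step1 : ∀ x : X, ∑ k ∈ (range K).filter (fun k => z k = x),
      g (((range K).filter (fun k => z k = x) |>.filter fun j => j < k).card)
      ≤ 1 + 2 * Real.sqrt (cnt x) := by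
    intro x
    rw [aux_rank_sum g (cnt x) _ rfl]
    exact hT (cnt x)
  have step2 : ∑ x : X, (1 + 2 * Real.sqrt (cnt x))
      = m + 2 * ∑ x : X, Real.sqrt (cnt x) := by
    rw [Finset.sum_add_distrib, Finset.sum_const, ← Finset.mul_sum]
    simp [hm]
  -- Cauchy–Schwarz
  have hsumcnt : ∑ x : X, (cnt x : ℝ) = K := by
    have := Finset.card_eq_sum_card_fiberwise
      (f := fun k => z k) (s := range K) (t := univ) (fun k _ => Finset.mem_univ _)
    rw [Finset.card_range] at this
    exact_mod_cast this.symm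
  have cauchy : (∑ x : X, Real.sqrt (cnt x)) ^ 2 ≤ (m : ℝ) * K := by
    have h := Finset.sum_mul_sq_le_sq_mul_sq (univ : Finset X)
      (fun _ => (1:ℝ)) (fun x => Real.sqrt (cnt x))
    simp only [one_mul, one_pow] at h
    calc (∑ x : X, Real.sqrt (cnt x)) ^ 2
        ≤ (∑ _x : X, (1:ℝ)) * ∑ x : X, Real.sqrt (cnt x) ^ 2 := h
      _ = (m : ℝ) * K := by
          rw [Finset.sum_const]
          congr 1
          · simp [hm]
          · rw [← hsumcnt]
            exact Finset.sum_congr rfl fun x _ =>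
              Real.sq_sqrt (Nat.cast_nonneg _)
  have hsqrt : ∑ x : X, Real.sqrt (cnt x) ≤ Real.sqrt ((m:ℝ) * K) := by
    have hnn : 0 ≤ ∑ x : X, Real.sqrt (cnt x) :=
      Finset.sum_nonneg fun x _ => Real.sqrt_nonneg _
    nlinarith [Real.sq_sqrt (show (0:ℝ) ≤ (m:ℝ)*K by positivity),
      Real.sqrt_nonneg ((m:ℝ)*K)]
  calc ∑ x : X, ∑ k ∈ (range K).filter (fun k => z k = x),
        g (((range K).filter (fun k => z k = x) |>.filter fun j => j < k).card)
      ≤ ∑ x : X, (1 + 2 * Real.sqrt (cnt x)) := Finset.sum_le_sum fun x _ => step1 x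
    _ = m + 2 * ∑ x : X, Real.sqrt (cnt x) := step2
    _ ≤ m + 2 * Real.sqrt ((m:ℝ) * K) := by linarith
end
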